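/- Let σ : VF ⇒ GU and σ' : VF' ⇒ G'U' be strict cells in Dbl with common vertical arrow V : 𝔹 → 𝔻 (so F : 𝔸 → 𝔹, F' : 𝔸' → 𝔹 strict, G : ℂ → 𝔻, G' : ℂ' → 𝔻 strict). Then there exist a unique colax functor U ×_V U' : 𝔸 ×_𝔹 𝔸' → ℂ ×_𝔻 ℂ' and strict cells π₁, π₂ over the pullback projections (given set-theoretically by (A, A') ↦ (UA, U'A') on all data), and the resulting square is a pullback in the category Dbl₁ whose objects are colax double functors and whose morphisms are arbitrary double cells of Dbl. -/

import Mathlib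

/-!
Core definitions: weak double categories (pseudocategories in `Cat`), lax and
colax double functors, strict functors, horizontal transformations, and the
double cells of the strict double category `Dbl` of Grandis–Paré.
-/

universe u u₀ v₀ v₁ v₂

/-- The underlying data (carriers) of a double category: objects, horizontal
arrows, vertical arrows and double cells. -/
structure DblData : Type (u + 1) where
  Obj : Type u
  Hor : Obj → Obj → Type u
  Ver : Obj → Obj → Type u
  Cell : ∀ {A B A' B' : Obj}, Hor A B → Ver A A' → Ver B B' → Hor A' B' → Type u

/-- A weak double category: a pseudocategory in `Cat`.  The horizontal
(transversal) direction is a strict category; vertical composition is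
associative and unitary up to coherent special isomorphisms `vassoc`, `lunit`,
`runit` (satisfying naturality, the pentagon and the triangle). -/
structure WeakDoubleCat extends DblData.{u} : Type (u + 1) where
  hid : ∀ A, Hor A A
  hcomp : ∀ {A B C}, Hor A B → Hor B C → Hor A C
  hid_comp : ∀ {A B} (f : Hor A B), hcomp (hid A) f = f
  hcomp_id : ∀ {A B} (f : Hor A B), hcomp f (hid B) = f
  hassoc : ∀ {A B C D} (f : Hor A B) (g : Hor B C) (h : Hor C D),
    hcomp (hcomp f g) h = hcomp f (hcomp g h)
  /-- identity double cell on a vertical arrow (for horizontal composition) -/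
  cid : ∀ {A A'} (u : Ver A A'), Cell (hid A) u u (hid A')
  /-- horizontal (strict) composition of double cells -/
  chcomp : ∀ {A B C A' B' C'} {f : Hor A B} {g : Hor B C}
    {u : Ver A A'} {v : Ver B B'} {w : Ver C C'} {f' : Hor A' B'} {g' : Hor B' C'},
    Cell f u v f' → Cell g v w g' → Cell (hcomp f g) u w (hcomp f' g')
  cid_chcomp : ∀ {A B A' B'} {f : Hor A B} {u : Ver A A'} {v : Ver B B'} {f' : Hor A' B'}
    (α : Cell f u v f'), HEq (chcomp (cid u) α) α
  chcomp_cid : ∀ {A B A' B'} {f : Hor A B} {u : Ver A A'} {v : Ver B B'} {f' : Hor A' B'}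
    (α : Cell f u v f'), HEq (chcomp α (cid v)) α
  chcomp_assoc : ∀ {A B C D A' B' C' D'} {f : Hor A B} {g : Hor B C} {h : Hor C D}
    {u : Ver A A'} {v : Ver B B'} {w : Ver C C'} {x : Ver D D'}
    {f' : Hor A' B'} {g' : Hor B' C'} {h' : Hor C' D'}
    (α : Cell f u v f') (β : Cell g v w g') (γ : Cell h w x h'),
    HEq (chcomp (chcomp α β) γ) (chcomp α (chcomp β γ))
  vid : ∀ A, Ver A A
  vcomp : ∀ {A B C}, Ver A B → Ver B C → Ver A C
  /-- identity double cell on a horizontal arrow (for vertical composition) -/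
  idcell : ∀ {A B} (f : Hor A B), Cell f (vid A) (vid B) f
  /-- vertical composition of double cells -/
  cvcomp : ∀ {A B A' B' A'' B''} {f : Hor A B} {u : Ver A A'} {v : Ver B B'} {g : Hor A' B'}
    {u' : Ver A' A''} {v' : Ver B' B''} {h : Hor A'' B''},
    Cell f u v g → Cell g u' v' h → Cell f (vcomp u u') (vcomp v v') h
  idcell_hid : ∀ A, idcell (hid A) = cid (vid A)
  idcell_hcomp : ∀ {A B C} (f : Hor A B) (g : Hor B C),
    idcell (hcomp f g) = chcomp (idcell f) (idcell g)
  cid_vcomp : ∀ {A B C} (u : Ver A B) (u' : Ver B C),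
    cvcomp (cid u) (cid u') = cid (vcomp u u')
  interchange : ∀ {A B C A' B' C' A'' B'' C''}
    {t₁ : Hor A B} {t₂ : Hor B C} {u₀ : Ver A A'} {u₁ : Ver B B'} {u₂ : Ver C C'}
    {m₁ : Hor A' B'} {m₂ : Hor B' C'} {w₀ : Ver A' A''} {w₁ : Ver B' B''} {w₂ : Ver C' C''}
    {b₁ : Hor A'' B''} {b₂ : Hor B'' C''}
    (α : Cell t₁ u₀ u₁ m₁) (β : Cell t₂ u₁ u₂ m₂)
    (γ : Cell m₁ w₀ w₁ b₁) (δ : Cell m₂ w₁ w₂ b₂),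
    chcomp (cvcomp α γ) (cvcomp β δ) = cvcomp (chcomp α β) (chcomp γ δ)
  /-- associativity special isomorphism for vertical composition -/
  vassoc : ∀ {A B C D} (u : Ver A B) (v : Ver B C) (w : Ver C D),
    Cell (hid A) (vcomp u (vcomp v w)) (vcomp (vcomp u v) w) (hid D)
  vassocInv : ∀ {A B C D} (u : Ver A B) (v : Ver B C) (w : Ver C D),
    Cell (hid A) (vcomp (vcomp u v) w) (vcomp u (vcomp v w)) (hid D)
  vassoc_vassocInv : ∀ {A B C D} (u : Ver A B) (v : Ver B C) (w : Ver C D),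
    HEq (chcomp (vassoc u v w) (vassocInv u v w)) (cid (vcomp u (vcomp v w)))
  vassocInv_vassoc : ∀ {A B C D} (u : Ver A B) (v : Ver B C) (w : Ver C D),
    HEq (chcomp (vassocInv u v w) (vassoc u v w)) (cid (vcomp (vcomp u v) w))
  /-- left unit special isomorphism -/
  lunit : ∀ {A B} (u : Ver A B), Cell (hid A) (vcomp (vid A) u) u (hid B)
  lunitInv : ∀ {A B} (u : Ver A B), Cell (hid A) u (vcomp (vid A) u) (hid B)
  lunit_lunitInv : ∀ {A B} (u : Ver A B),
    HEq (chcomp (lunit u) (lunitInv u)) (cid (vcomp (vid A) u))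
  lunitInv_lunit : ∀ {A B} (u : Ver A B), HEq (chcomp (lunitInv u) (lunit u)) (cid u)
  /-- right unit special isomorphism -/
  runit : ∀ {A B} (u : Ver A B), Cell (hid A) (vcomp u (vid B)) u (hid B)
  runitInv : ∀ {A B} (u : Ver A B), Cell (hid A) u (vcomp u (vid B)) (hid B)
  runit_runitInv : ∀ {A B} (u : Ver A B),
    HEq (chcomp (runit u) (runitInv u)) (cid (vcomp u (vid B)))
  runitInv_runit : ∀ {A B} (u : Ver A B), HEq (chcomp (runitInv u) (runit u)) (cid u)
  vassoc_nat : ∀ {A₀ B₀ A₁ B₁ A₂ B₂ A₃ B₃}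
    {g₀ : Hor A₀ B₀} {g₁ : Hor A₁ B₁} {g₂ : Hor A₂ B₂} {g₃ : Hor A₃ B₃}
    {a₁ : Ver A₀ A₁} {a₂ : Ver A₁ A₂} {a₃ : Ver A₂ A₃}
    {b₁ : Ver B₀ B₁} {b₂ : Ver B₁ B₂} {b₃ : Ver B₂ B₃}
    (α : Cell g₀ a₁ b₁ g₁) (β : Cell g₁ a₂ b₂ g₂) (γ : Cell g₂ a₃ b₃ g₃),
    HEq (chcomp (vassoc a₁ a₂ a₃) (cvcomp (cvcomp α β) γ))
        (chcomp (cvcomp α (cvcomp β γ)) (vassoc b₁ b₂ b₃))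
  lunit_nat : ∀ {A B A' B'} {f : Hor A B} {u : Ver A A'} {v : Ver B B'} {g : Hor A' B'}
    (α : Cell f u v g),
    HEq (chcomp (lunit u) α) (chcomp (cvcomp (idcell f) α) (lunit v))
  runit_nat : ∀ {A B A' B'} {f : Hor A B} {u : Ver A A'} {v : Ver B B'} {g : Hor A' B'}
    (α : Cell f u v g),
    HEq (chcomp (runit u) α) (chcomp (cvcomp α (idcell g)) (runit v))
  pentagon : ∀ {A B C D E} (u : Ver A B) (v : Ver B C) (w : Ver C D) (x : Ver D E),
    HEq (chcomp (vassoc u v (vcomp w x)) (vassoc (vcomp u v) w x))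
        (chcomp (cvcomp (cid u) (vassoc v w x))
          (chcomp (vassoc u (vcomp v w) x) (cvcomp (vassoc u v w) (cid x))))
  triangle : ∀ {A B C} (u : Ver A B) (v : Ver B C),
    HEq (chcomp (vassoc u (vid B) v) (cvcomp (runit u) (cid v)))
        (cvcomp (cid u) (lunit v))

/-- A lax (double) functor between weak double categories: strictly functorial
in the horizontal direction, with comparison special cells `laxid` and
`laxcomp` for the vertical identities and compositions, natural and satisfying
the unit and associativity coherence conditions. -/
structure LaxDblFunctor (X Y : WeakDoubleCat.{u}) : Type u where
  obj : X.Obj → Y.Obj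
  hmap : ∀ {A B}, X.Hor A B → Y.Hor (obj A) (obj B)
  vmap : ∀ {A B}, X.Ver A B → Y.Ver (obj A) (obj B)
  cmap : ∀ {A B A' B'} {f : X.Hor A B} {u : X.Ver A A'} {v : X.Ver B B'} {g : X.Hor A' B'},
    X.Cell f u v g → Y.Cell (hmap f) (vmap u) (vmap v) (hmap g)
  hmap_id : ∀ A, hmap (X.hid A) = Y.hid (obj A)
  hmap_comp : ∀ {A B C} (f : X.Hor A B) (g : X.Hor B C),
    hmap (X.hcomp f g) = Y.hcomp (hmap f) (hmap g)
  cmap_cid : ∀ {A A'} (u : X.Ver A A'), HEq (cmap (X.cid u)) (Y.cid (vmap u))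
  cmap_chcomp : ∀ {A B C A' B' C'} {f : X.Hor A B} {g : X.Hor B C}
    {u : X.Ver A A'} {v : X.Ver B B'} {w : X.Ver C C'} {f' : X.Hor A' B'} {g' : X.Hor B' C'}
    (α : X.Cell f u v f') (β : X.Cell g v w g'),
    HEq (cmap (X.chcomp α β)) (Y.chcomp (cmap α) (cmap β))
  laxid : ∀ A, Y.Cell (Y.hid (obj A)) (Y.vid (obj A)) (vmap (X.vid A)) (Y.hid (obj A))
  laxcomp : ∀ {A B C} (u : X.Ver A B) (v : X.Ver B C),
    Y.Cell (Y.hid (obj A)) (Y.vcomp (vmap u) (vmap v)) (vmap (X.vcomp u v)) (Y.hid (obj C))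
  laxid_nat : ∀ {A B} (f : X.Hor A B),
    HEq (Y.chcomp (laxid A) (cmap (X.idcell f))) (Y.chcomp (Y.idcell (hmap f)) (laxid B))
  laxcomp_nat : ∀ {A B A' B' A'' B''} {f : X.Hor A B} {u : X.Ver A A'} {v : X.Ver B B'}
    {g : X.Hor A' B'} {u' : X.Ver A' A''} {v' : X.Ver B' B''} {h : X.Hor A'' B''}
    (α : X.Cell f u v g) (β : X.Cell g u' v' h),
    HEq (Y.chcomp (laxcomp u u') (cmap (X.cvcomp α β)))
        (Y.chcomp (Y.cvcomp (cmap α) (cmap β)) (laxcomp v v'))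
  lax_lunit : ∀ {A B} (u : X.Ver A B),
    HEq (Y.chcomp (Y.cvcomp (laxid A) (Y.cid (vmap u)))
          (Y.chcomp (laxcomp (X.vid A) u) (cmap (X.lunit u))))
        (Y.lunit (vmap u))
  lax_runit : ∀ {A B} (u : X.Ver A B),
    HEq (Y.chcomp (Y.cvcomp (Y.cid (vmap u)) (laxid B))
          (Y.chcomp (laxcomp u (X.vid B)) (cmap (X.runit u))))
        (Y.runit (vmap u))
  lax_assoc : ∀ {A B C D} (u : X.Ver A B) (v : X.Ver B C) (w : X.Ver C D),
    HEq (Y.chcomp (Y.vassoc (vmap u) (vmap v) (vmap w))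
          (Y.chcomp (Y.cvcomp (laxcomp u v) (Y.cid (vmap w))) (laxcomp (X.vcomp u v) w)))
        (Y.chcomp (Y.cvcomp (Y.cid (vmap u)) (laxcomp v w))
          (Y.chcomp (laxcomp u (X.vcomp v w)) (cmap (X.vassoc u v w))))

/-- A lax double functor is strict when its comparison cells are identities. -/
def LaxDblFunctor.IsStrict {X Y : WeakDoubleCat.{u}} (F : LaxDblFunctor X Y) : Prop :=
  (∀ A, F.vmap (X.vid A) = Y.vid (F.obj A)) ∧
  (∀ {A B C} (u : X.Ver A B) (v : X.Ver B C),
    F.vmap (X.vcomp u v) = Y.vcomp (F.vmap u) (F.vmap v)) ∧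
  (∀ A, HEq (F.laxid A) (Y.cid (Y.vid (F.obj A)))) ∧
  (∀ {A B C} (u : X.Ver A B) (v : X.Ver B C),
    HEq (F.laxcomp u v) (Y.cid (Y.vcomp (F.vmap u) (F.vmap v))))

/-- A colax (double) functor: as a lax one but with the comparison special
cells in the opposite direction. -/
structure ColaxDblFunctor (X Y : WeakDoubleCat.{u}) : Type u where
  obj : X.Obj → Y.Obj
  hmap : ∀ {A B}, X.Hor A B → Y.Hor (obj A) (obj B)
  vmap : ∀ {A B}, X.Ver A B → Y.Ver (obj A) (obj B)
  cmap : ∀ {A B A' B'} {f : X.Hor A B} {u : X.Ver A A'} {v : X.Ver B B'} {g : X.Hor A' B'},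
    X.Cell f u v g → Y.Cell (hmap f) (vmap u) (vmap v) (hmap g)
  hmap_id : ∀ A, hmap (X.hid A) = Y.hid (obj A)
  hmap_comp : ∀ {A B C} (f : X.Hor A B) (g : X.Hor B C),
    hmap (X.hcomp f g) = Y.hcomp (hmap f) (hmap g)
  cmap_cid : ∀ {A A'} (u : X.Ver A A'), HEq (cmap (X.cid u)) (Y.cid (vmap u))
  cmap_chcomp : ∀ {A B C A' B' C'} {f : X.Hor A B} {g : X.Hor B C}
    {u : X.Ver A A'} {v : X.Ver B B'} {w : X.Ver C C'} {f' : X.Hor A' B'} {g' : X.Hor B' C'}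
    (α : X.Cell f u v f') (β : X.Cell g v w g'),
    HEq (cmap (X.chcomp α β)) (Y.chcomp (cmap α) (cmap β))
  colaxid : ∀ A, Y.Cell (Y.hid (obj A)) (vmap (X.vid A)) (Y.vid (obj A)) (Y.hid (obj A))
  colaxcomp : ∀ {A B C} (u : X.Ver A B) (v : X.Ver B C),
    Y.Cell (Y.hid (obj A)) (vmap (X.vcomp u v)) (Y.vcomp (vmap u) (vmap v)) (Y.hid (obj C))
  colaxid_nat : ∀ {A B} (f : X.Hor A B),
    HEq (Y.chcomp (cmap (X.idcell f)) (colaxid B)) (Y.chcomp (colaxid A) (Y.idcell (hmap f)))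
  colaxcomp_nat : ∀ {A B A' B' A'' B''} {f : X.Hor A B} {u : X.Ver A A'} {v : X.Ver B B'}
    {g : X.Hor A' B'} {u' : X.Ver A' A''} {v' : X.Ver B' B''} {h : X.Hor A'' B''}
    (α : X.Cell f u v g) (β : X.Cell g u' v' h),
    HEq (Y.chcomp (cmap (X.cvcomp α β)) (colaxcomp v v'))
        (Y.chcomp (colaxcomp u u') (Y.cvcomp (cmap α) (cmap β)))
  colax_lunit : ∀ {A B} (u : X.Ver A B),
    HEq (Y.chcomp (colaxcomp (X.vid A) u)
          (Y.chcomp (Y.cvcomp (colaxid A) (Y.cid (vmap u))) (Y.lunit (vmap u))))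
        (cmap (X.lunit u))
  colax_runit : ∀ {A B} (u : X.Ver A B),
    HEq (Y.chcomp (colaxcomp u (X.vid B))
          (Y.chcomp (Y.cvcomp (Y.cid (vmap u)) (colaxid B)) (Y.runit (vmap u))))
        (cmap (X.runit u))
  colax_assoc : ∀ {A B C D} (u : X.Ver A B) (v : X.Ver B C) (w : X.Ver C D),
    HEq (Y.chcomp (cmap (X.vassoc u v w))
          (Y.chcomp (colaxcomp (X.vcomp u v) w) (Y.cvcomp (colaxcomp u v) (Y.cid (vmap w)))))
        (Y.chcomp (colaxcomp u (X.vcomp v w))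
          (Y.chcomp (Y.cvcomp (Y.cid (vmap u)) (colaxcomp v w))
            (Y.vassoc (vmap u) (vmap v) (vmap w))))

/-- A colax double functor is strict when its comparison cells are identities. -/
def ColaxDblFunctor.IsStrict {X Y : WeakDoubleCat.{u}} (F : ColaxDblFunctor X Y) : Prop :=
  (∀ A, F.vmap (X.vid A) = Y.vid (F.obj A)) ∧
  (∀ {A B C} (u : X.Ver A B) (v : X.Ver B C),
    F.vmap (X.vcomp u v) = Y.vcomp (F.vmap u) (F.vmap v)) ∧
  (∀ A, HEq (F.colaxid A) (Y.cid (Y.vid (F.obj A)))) ∧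
  (∀ {A B C} (u : X.Ver A B) (v : X.Ver B C),
    HEq (F.colaxcomp u v) (Y.cid (Y.vcomp (F.vmap u) (F.vmap v))))

/-- Horizontal transformation between lax double functors: the 2-cells of the
2-category `LxDbl`. -/
structure HorizTransf {X Y : WeakDoubleCat.{u}} (F G : LaxDblFunctor X Y) : Type u where
  app : ∀ A, Y.Hor (F.obj A) (G.obj A)
  cellapp : ∀ {A B} (u : X.Ver A B), Y.Cell (app A) (F.vmap u) (G.vmap u) (app B)
  hnat : ∀ {A B} (f : X.Hor A B), Y.hcomp (F.hmap f) (app B) = Y.hcomp (app A) (G.hmap f)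
  cellnat : ∀ {A B A' B'} {f : X.Hor A B} {u : X.Ver A A'} {v : X.Ver B B'} {g : X.Hor A' B'}
    (α : X.Cell f u v g),
    HEq (Y.chcomp (F.cmap α) (cellapp v)) (Y.chcomp (cellapp u) (G.cmap α))
  unit_compat : ∀ A,
    HEq (Y.chcomp (F.laxid A) (cellapp (X.vid A)))
        (Y.chcomp (Y.idcell (app A)) (G.laxid A))
  comp_compat : ∀ {A B C} (u : X.Ver A B) (v : X.Ver B C),
    HEq (Y.chcomp (F.laxcomp u v) (cellapp (X.vcomp u v)))
        (Y.chcomp (Y.cvcomp (cellapp u) (cellapp v)) (G.laxcomp u v))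

/-- Horizontal transformation between colax double functors: the 2-cells of
the 2-category `CxDbl`. -/
structure CHorizTransf {X Y : WeakDoubleCat.{u}} (F G : ColaxDblFunctor X Y) : Type u where
  app : ∀ A, Y.Hor (F.obj A) (G.obj A)
  cellapp : ∀ {A B} (u : X.Ver A B), Y.Cell (app A) (F.vmap u) (G.vmap u) (app B)
  hnat : ∀ {A B} (f : X.Hor A B), Y.hcomp (F.hmap f) (app B) = Y.hcomp (app A) (G.hmap f)
  cellnat : ∀ {A B A' B'} {f : X.Hor A B} {u : X.Ver A A'} {v : X.Ver B B'} {g : X.Hor A' B'}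
    (α : X.Cell f u v g),
    HEq (Y.chcomp (F.cmap α) (cellapp v)) (Y.chcomp (cellapp u) (G.cmap α))
  unit_compat : ∀ A,
    HEq (Y.chcomp (F.colaxid A) (Y.idcell (app A)))
        (Y.chcomp (cellapp (X.vid A)) (G.colaxid A))
  comp_compat : ∀ {A B C} (u : X.Ver A B) (v : X.Ver B C),
    HEq (Y.chcomp (F.colaxcomp u v) (Y.cvcomp (cellapp u) (cellapp v)))
        (Y.chcomp (cellapp (X.vcomp u v)) (G.colaxcomp u v))

/-- A double cell of the strict double category `Dbl`:  `F, G` are lax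
functors (horizontal arrows), `U, V` colax functors (vertical arrows), and
the cell is a transformation `V F ⇒ G U` compatible with all the structure. -/
structure DblCellGP {XA XB XC XD : WeakDoubleCat.{u}}
    (F : LaxDblFunctor XA XB) (G : LaxDblFunctor XC XD)
    (U : ColaxDblFunctor XA XC) (V : ColaxDblFunctor XB XD) : Type u where
  app : ∀ A, XD.Hor (V.obj (F.obj A)) (G.obj (U.obj A))
  cellapp : ∀ {A B} (u : XA.Ver A B),
    XD.Cell (app A) (V.vmap (F.vmap u)) (G.vmap (U.vmap u)) (app B)
  hnat : ∀ {A B} (f : XA.Hor A B),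
    XD.hcomp (V.hmap (F.hmap f)) (app B) = XD.hcomp (app A) (G.hmap (U.hmap f))
  cellnat : ∀ {A B A' B'} {f : XA.Hor A B} {u : XA.Ver A A'} {v : XA.Ver B B'}
    {g : XA.Hor A' B'} (α : XA.Cell f u v g),
    HEq (XD.chcomp (V.cmap (F.cmap α)) (cellapp v))
        (XD.chcomp (cellapp u) (G.cmap (U.cmap α)))
  unit_compat : ∀ A,
    HEq (XD.chcomp (V.cmap (F.laxid A))
          (XD.chcomp (cellapp (XA.vid A)) (G.cmap (U.colaxid A))))
        (XD.chcomp (V.colaxid (F.obj A))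
          (XD.chcomp (XD.idcell (app A)) (G.laxid (U.obj A))))
  comp_compat : ∀ {A B C} (u : XA.Ver A B) (v : XA.Ver B C),
    HEq (XD.chcomp (V.cmap (F.laxcomp u v))
          (XD.chcomp (cellapp (XA.vcomp u v)) (G.cmap (U.colaxcomp u v))))
        (XD.chcomp (V.colaxcomp (F.vmap u) (F.vmap v))
          (XD.chcomp (XD.cvcomp (cellapp u) (cellapp v))
            (G.laxcomp (U.vmap u) (U.vmap v))))

/-- A cell of `Dbl` is (horizontally) strict if its horizontal boundaries are
strict functors and it is a horizontal identity on objects and vertical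
arrows, i.e. `V F = G U`. -/
def DblCellGP.IsStrict {XA XB XC XD : WeakDoubleCat.{u}}
    {F : LaxDblFunctor XA XB} {G : LaxDblFunctor XC XD}
    {U : ColaxDblFunctor XA XC} {V : ColaxDblFunctor XB XD}
    (π : DblCellGP F G U V) : Prop :=
  F.IsStrict ∧ G.IsStrict ∧
  (∀ A, V.obj (F.obj A) = G.obj (U.obj A)) ∧
  (∀ {A B} (f : XA.Hor A B), HEq (V.hmap (F.hmap f)) (G.hmap (U.hmap f))) ∧
  (∀ {A B} (u : XA.Ver A B), HEq (V.vmap (F.vmap u)) (G.vmap (U.vmap u))) ∧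
  (∀ {A B A' B'} {f : XA.Hor A B} {u : XA.Ver A A'} {v : XA.Ver B B'} {g : XA.Hor A' B'}
    (α : XA.Cell f u v g), HEq (V.cmap (F.cmap α)) (G.cmap (U.cmap α))) ∧
  (∀ A, HEq (π.app A) (XD.hid (V.obj (F.obj A)))) ∧
  (∀ {A B} (u : XA.Ver A B), HEq (π.cellapp u) (XD.cid (V.vmap (F.vmap u))))

/-- `H` is the composite `F' ∘ F` of the lax functors `F` and `F'`, expressed
componentwise. -/
def LaxCompSpec {X Y Z : WeakDoubleCat.{u}} (F : LaxDblFunctor X Y)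
    (F' : LaxDblFunctor Y Z) (H : LaxDblFunctor X Z) : Prop :=
  (∀ A, H.obj A = F'.obj (F.obj A)) ∧
  (∀ {A B} (f : X.Hor A B), HEq (H.hmap f) (F'.hmap (F.hmap f))) ∧
  (∀ {A B} (u : X.Ver A B), HEq (H.vmap u) (F'.vmap (F.vmap u))) ∧
  (∀ {A B A' B'} {f : X.Hor A B} {u : X.Ver A A'} {v : X.Ver B B'} {g : X.Hor A' B'}
    (α : X.Cell f u v g), HEq (H.cmap α) (F'.cmap (F.cmap α))) ∧
  (∀ A, HEq (H.laxid A) (Z.chcomp (F'.laxid (F.obj A)) (F'.cmap (F.laxid A)))) ∧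
  (∀ {A B C} (u : X.Ver A B) (v : X.Ver B C),
    HEq (H.laxcomp u v)
      (Z.chcomp (F'.laxcomp (F.vmap u) (F.vmap v)) (F'.cmap (F.laxcomp u v))))

/-- `H` is the composite `F' ∘ F` of the colax functors `F` and `F'`. -/
def ColaxCompSpec {X Y Z : WeakDoubleCat.{u}} (F : ColaxDblFunctor X Y)
    (F' : ColaxDblFunctor Y Z) (H : ColaxDblFunctor X Z) : Prop :=
  (∀ A, H.obj A = F'.obj (F.obj A)) ∧
  (∀ {A B} (f : X.Hor A B), HEq (H.hmap f) (F'.hmap (F.hmap f))) ∧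
  (∀ {A B} (u : X.Ver A B), HEq (H.vmap u) (F'.vmap (F.vmap u))) ∧
  (∀ {A B A' B'} {f : X.Hor A B} {u : X.Ver A A'} {v : X.Ver B B'} {g : X.Hor A' B'}
    (α : X.Cell f u v g), HEq (H.cmap α) (F'.cmap (F.cmap α))) ∧
  (∀ A, HEq (H.colaxid A) (Z.chcomp (F'.cmap (F.colaxid A)) (F'.colaxid (F.obj A)))) ∧
  (∀ {A B C} (u : X.Ver A B) (v : X.Ver B C),
    HEq (H.colaxcomp u v)
      (Z.chcomp (F'.cmap (F.colaxcomp u v)) (F'.colaxcomp (F.vmap u) (F.vmap v))))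

/-- `F` is the identity lax functor of `X`, expressed componentwise. -/
def LaxIdSpec {X : WeakDoubleCat.{u}} (F : LaxDblFunctor X X) : Prop :=
  (∀ A, F.obj A = A) ∧
  (∀ {A B} (f : X.Hor A B), HEq (F.hmap f) f) ∧
  (∀ {A B} (u : X.Ver A B), HEq (F.vmap u) u) ∧
  (∀ {A B A' B'} {f : X.Hor A B} {u : X.Ver A A'} {v : X.Ver B B'} {g : X.Hor A' B'}
    (α : X.Cell f u v g), HEq (F.cmap α) α) ∧
  (∀ A, HEq (F.laxid A) (X.cid (X.vid A))) ∧
  (∀ {A B C} (u : X.Ver A B) (v : X.Ver B C),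
    HEq (F.laxcomp u v) (X.cid (X.vcomp u v)))

/-- `F` is the identity colax functor of `X`, expressed componentwise. -/
def ColaxIdSpec {X : WeakDoubleCat.{u}} (F : ColaxDblFunctor X X) : Prop :=
  (∀ A, F.obj A = A) ∧
  (∀ {A B} (f : X.Hor A B), HEq (F.hmap f) f) ∧
  (∀ {A B} (u : X.Ver A B), HEq (F.vmap u) u) ∧
  (∀ {A B A' B'} {f : X.Hor A B} {u : X.Ver A A'} {v : X.Ver B B'} {g : X.Hor A' B'}
    (α : X.Cell f u v g), HEq (F.cmap α) α) ∧
  (∀ A, HEq (F.colaxid A) (X.cid (X.vid A))) ∧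
  (∀ {A B C} (u : X.Ver A B) (v : X.Ver B C),
    HEq (F.colaxcomp u v) (X.cid (X.vcomp u v)))

/-- `ρ` is the horizontal composite of the `Dbl`-cells `π` and `π'`
(composition along the common vertical boundary `V`), componentwise. -/
def HCompCellSpec {XA XB XC XD XB' XD' : WeakDoubleCat.{u}}
    {F : LaxDblFunctor XA XB} {G : LaxDblFunctor XC XD}
    {U : ColaxDblFunctor XA XC} {V : ColaxDblFunctor XB XD}
    {F' : LaxDblFunctor XB XB'} {G' : LaxDblFunctor XD XD'}
    {W : ColaxDblFunctor XB' XD'}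
    {F₂ : LaxDblFunctor XA XB'} {G₂ : LaxDblFunctor XC XD'}
    (π : DblCellGP F G U V) (π' : DblCellGP F' G' V W)
    (_ : LaxCompSpec F F' F₂) (_ : LaxCompSpec G G' G₂)
    (ρ : DblCellGP F₂ G₂ U W) : Prop :=
  (∀ A, HEq (ρ.app A) (XD'.hcomp (π'.app (F.obj A)) (G'.hmap (π.app A)))) ∧
  (∀ {A B} (u : XA.Ver A B),
    HEq (ρ.cellapp u) (XD'.chcomp (π'.cellapp (F.vmap u)) (G'.cmap (π.cellapp u))))

/-- `ρ` is the vertical composite of the `Dbl`-cells `π` and `σ`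
(composition along the common horizontal boundary `G`), componentwise. -/
def VCompCellSpec {XA XB XC XD XC' XD' : WeakDoubleCat.{u}}
    {F : LaxDblFunctor XA XB} {G : LaxDblFunctor XC XD}
    {U : ColaxDblFunctor XA XC} {V : ColaxDblFunctor XB XD}
    {H : LaxDblFunctor XC' XD'}
    {U' : ColaxDblFunctor XC XC'} {V' : ColaxDblFunctor XD XD'}
    {U₂ : ColaxDblFunctor XA XC'} {V₂ : ColaxDblFunctor XB XD'}
    (π : DblCellGP F G U V) (σ : DblCellGP G H U' V')
    (_ : ColaxCompSpec U U' U₂) (_ : ColaxCompSpec V V' V₂)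
    (ρ : DblCellGP F H U₂ V₂) : Prop :=
  (∀ A, HEq (ρ.app A) (XD'.hcomp (V'.hmap (π.app A)) (σ.app (U.obj A)))) ∧
  (∀ {A B} (u : XA.Ver A B),
    HEq (ρ.cellapp u) (XD'.chcomp (V'.cmap (π.cellapp u)) (σ.cellapp (U.vmap u))))


/-- The set-theoretical pullback of the carriers of two double functors. -/
def pbData {A B C : WeakDoubleCat.{u}} (F : LaxDblFunctor A C) (G : LaxDblFunctor B C) :
    DblData.{u} where
  Obj := {p : A.Obj × B.Obj // F.obj p.1 = G.obj p.2}
  Hor X Y := {p : A.Hor X.1.1 Y.1.1 × B.Hor X.1.2 Y.1.2 // HEq (F.hmap p.1) (G.hmap p.2)}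
  Ver X Y := {p : A.Ver X.1.1 Y.1.1 × B.Ver X.1.2 Y.1.2 // HEq (F.vmap p.1) (G.vmap p.2)}
  Cell f u v g :=
    {p : A.Cell f.1.1 u.1.1 v.1.1 g.1.1 × B.Cell f.1.2 u.1.2 v.1.2 g.1.2 //
      HEq (F.cmap p.1) (G.cmap p.2)}

/-- `P`, with the projections `p` and `q`, is the set-theoretical pullback
weak double category of the two functors `F` and `G` (cf. Proposition 2.1):
its carrier is the set-theoretic pullback and the projections are the strict
product projections. -/
def IsSetPullback {A B C : WeakDoubleCat.{u}} (F : LaxDblFunctor A C) (G : LaxDblFunctor B C)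
    (P : WeakDoubleCat.{u}) (hcar : P.toDblData = pbData F G)
    (p : LaxDblFunctor P A) (q : LaxDblFunctor P B) : Prop :=
  p.IsStrict ∧ q.IsStrict ∧
  (∀ x : P.Obj, p.obj x = (cast (congrArg DblData.Obj hcar) x).val.1) ∧
  (∀ x : P.Obj, q.obj x = (cast (congrArg DblData.Obj hcar) x).val.2) ∧
  HEq (@LaxDblFunctor.hmap P A p)
    (fun (X Y : (pbData F G).Obj) (f : (pbData F G).Hor X Y) => f.val.1) ∧
  HEq (@LaxDblFunctor.hmap P B q)
    (fun (X Y : (pbData F G).Obj) (f : (pbData F G).Hor X Y) => f.val.2) ∧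
  HEq (@LaxDblFunctor.vmap P A p)
    (fun (X Y : (pbData F G).Obj) (u : (pbData F G).Ver X Y) => u.val.1) ∧
  HEq (@LaxDblFunctor.vmap P B q)
    (fun (X Y : (pbData F G).Obj) (u : (pbData F G).Ver X Y) => u.val.2) ∧
  HEq (@LaxDblFunctor.cmap P A p)
    (fun (X Y X' Y' : (pbData F G).Obj) (f : (pbData F G).Hor X Y)
      (u : (pbData F G).Ver X X') (v : (pbData F G).Ver Y Y') (g : (pbData F G).Hor X' Y')
      (α : (pbData F G).Cell f u v g) => α.val.1) ∧
  HEq (@LaxDblFunctor.cmap P B q)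
    (fun (X Y X' Y' : (pbData F G).Obj) (f : (pbData F G).Hor X Y)
      (u : (pbData F G).Ver X X') (v : (pbData F G).Ver Y Y') (g : (pbData F G).Hor X' Y')
      (α : (pbData F G).Cell f u v g) => α.val.2)


/-! ### Auxiliary toolkit: congruence lemmas for heterogeneous equality -/

namespace WeakDoubleCat

variable (Y : WeakDoubleCat.{u})

theorem hidCongr {A A' : Y.Obj} (h : A = A') : HEq (Y.hid A) (Y.hid A') := by
  subst h; rfl

theorem vidCongr {A A' : Y.Obj} (h : A = A') : HEq (Y.vid A) (Y.vid A') := by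
  subst h; rfl

theorem hcompCongr {A B C A' B' C' : Y.Obj} (hA : A = A') (hB : B = B') (hC : C = C')
    {f : Y.Hor A B} {f' : Y.Hor A' B'} {g : Y.Hor B C} {g' : Y.Hor B' C'}
    (hf : HEq f f') (hg : HEq g g') : HEq (Y.hcomp f g) (Y.hcomp f' g') := by
  subst hA; subst hB; subst hC
  obtain rfl := eq_of_heq hf; obtain rfl := eq_of_heq hg; rfl

theorem vcompCongr {A B C A' B' C' : Y.Obj} (hA : A = A') (hB : B = B') (hC : C = C')
    {f : Y.Ver A B} {f' : Y.Ver A' B'} {g : Y.Ver B C} {g' : Y.Ver B' C'}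
    (hf : HEq f f') (hg : HEq g g') : HEq (Y.vcomp f g) (Y.vcomp f' g') := by
  subst hA; subst hB; subst hC
  obtain rfl := eq_of_heq hf; obtain rfl := eq_of_heq hg; rfl

theorem cidCongr {A B A' B' : Y.Obj} (hA : A = A') (hB : B = B')
    {u : Y.Ver A B} {u' : Y.Ver A' B'} (hu : HEq u u') : HEq (Y.cid u) (Y.cid u') := by
  subst hA; subst hB; obtain rfl := eq_of_heq hu; rfl

theorem idcellCongr {A B A' B' : Y.Obj} (hA : A = A') (hB : B = B')
    {f : Y.Hor A B} {f' : Y.Hor A' B'} (hf : HEq f f') :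
    HEq (Y.idcell f) (Y.idcell f') := by
  subst hA; subst hB; obtain rfl := eq_of_heq hf; rfl

theorem chcompCongr {A B C A' B' C' A₂ B₂ C₂ A₂' B₂' C₂' : Y.Obj}
    (hA : A = A₂) (hB : B = B₂) (hC : C = C₂)
    (hA' : A' = A₂') (hB' : B' = B₂') (hC' : C' = C₂')
    {f : Y.Hor A B} {g : Y.Hor B C} {u : Y.Ver A A'} {v : Y.Ver B B'} {w : Y.Ver C C'}
    {f' : Y.Hor A' B'} {g' : Y.Hor B' C'}
    {f₂ : Y.Hor A₂ B₂} {g₂ : Y.Hor B₂ C₂} {u₂ : Y.Ver A₂ A₂'} {v₂ : Y.Ver B₂ B₂'}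
    {w₂ : Y.Ver C₂ C₂'} {f₂' : Y.Hor A₂' B₂'} {g₂' : Y.Hor B₂' C₂'}
    (hf : HEq f f₂) (hg : HEq g g₂) (hu : HEq u u₂) (hv : HEq v v₂) (hw : HEq w w₂)
    (hf' : HEq f' f₂') (hg' : HEq g' g₂')
    {α : Y.Cell f u v f'} {β : Y.Cell g v w g'}
    {α₂ : Y.Cell f₂ u₂ v₂ f₂'} {β₂ : Y.Cell g₂ v₂ w₂ g₂'}
    (hα : HEq α α₂) (hβ : HEq β β₂) :
    HEq (Y.chcomp α β) (Y.chcomp α₂ β₂) := by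
  subst hA; subst hB; subst hC; subst hA'; subst hB'; subst hC'
  obtain rfl := eq_of_heq hf; obtain rfl := eq_of_heq hg
  obtain rfl := eq_of_heq hu; obtain rfl := eq_of_heq hv; obtain rfl := eq_of_heq hw
  obtain rfl := eq_of_heq hf'; obtain rfl := eq_of_heq hg'
  obtain rfl := eq_of_heq hα; obtain rfl := eq_of_heq hβ; rfl

theorem cvcompCongr {A B A' B' A'' B'' A₂ B₂ A₂' B₂' A₂'' B₂'' : Y.Obj}
    (hA : A = A₂) (hB : B = B₂) (hA' : A' = A₂') (hB' : B' = B₂')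
    (hA'' : A'' = A₂'') (hB'' : B'' = B₂'')
    {f : Y.Hor A B} {u : Y.Ver A A'} {v : Y.Ver B B'} {g : Y.Hor A' B'}
    {u' : Y.Ver A' A''} {v' : Y.Ver B' B''} {h : Y.Hor A'' B''}
    {f₂ : Y.Hor A₂ B₂} {u₂ : Y.Ver A₂ A₂'} {v₂ : Y.Ver B₂ B₂'} {g₂ : Y.Hor A₂' B₂'}
    {u₂' : Y.Ver A₂' A₂''} {v₂' : Y.Ver B₂' B₂''} {h₂ : Y.Hor A₂'' B₂''}
    (hf : HEq f f₂) (hu : HEq u u₂) (hv : HEq v v₂) (hg : HEq g g₂)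
    (hu' : HEq u' u₂') (hv' : HEq v' v₂') (hh : HEq h h₂)
    {α : Y.Cell f u v g} {β : Y.Cell g u' v' h}
    {α₂ : Y.Cell f₂ u₂ v₂ g₂} {β₂ : Y.Cell g₂ u₂' v₂' h₂}
    (hα : HEq α α₂) (hβ : HEq β β₂) :
    HEq (Y.cvcomp α β) (Y.cvcomp α₂ β₂) := by
  subst hA; subst hB; subst hA'; subst hB'; subst hA''; subst hB''
  obtain rfl := eq_of_heq hf; obtain rfl := eq_of_heq hu; obtain rfl := eq_of_heq hv
  obtain rfl := eq_of_heq hg; obtain rfl := eq_of_heq hu'; obtain rfl := eq_of_heq hv'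
  obtain rfl := eq_of_heq hh
  obtain rfl := eq_of_heq hα; obtain rfl := eq_of_heq hβ; rfl

theorem vassocCongr {A B C D A₂ B₂ C₂ D₂ : Y.Obj}
    (hA : A = A₂) (hB : B = B₂) (hC : C = C₂) (hD : D = D₂)
    {u : Y.Ver A B} {v : Y.Ver B C} {w : Y.Ver C D}
    {u₂ : Y.Ver A₂ B₂} {v₂ : Y.Ver B₂ C₂} {w₂ : Y.Ver C₂ D₂}
    (hu : HEq u u₂) (hv : HEq v v₂) (hw : HEq w w₂) :
    HEq (Y.vassoc u v w) (Y.vassoc u₂ v₂ w₂) := by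
  subst hA; subst hB; subst hC; subst hD
  obtain rfl := eq_of_heq hu; obtain rfl := eq_of_heq hv; obtain rfl := eq_of_heq hw; rfl

theorem vassocInvCongr {A B C D A₂ B₂ C₂ D₂ : Y.Obj}
    (hA : A = A₂) (hB : B = B₂) (hC : C = C₂) (hD : D = D₂)
    {u : Y.Ver A B} {v : Y.Ver B C} {w : Y.Ver C D}
    {u₂ : Y.Ver A₂ B₂} {v₂ : Y.Ver B₂ C₂} {w₂ : Y.Ver C₂ D₂}
    (hu : HEq u u₂) (hv : HEq v v₂) (hw : HEq w w₂) :
    HEq (Y.vassocInv u v w) (Y.vassocInv u₂ v₂ w₂) := by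
  subst hA; subst hB; subst hC; subst hD
  obtain rfl := eq_of_heq hu; obtain rfl := eq_of_heq hv; obtain rfl := eq_of_heq hw; rfl

theorem lunitCongr {A B A₂ B₂ : Y.Obj} (hA : A = A₂) (hB : B = B₂)
    {u : Y.Ver A B} {u₂ : Y.Ver A₂ B₂} (hu : HEq u u₂) :
    HEq (Y.lunit u) (Y.lunit u₂) := by
  subst hA; subst hB; obtain rfl := eq_of_heq hu; rfl

theorem lunitInvCongr {A B A₂ B₂ : Y.Obj} (hA : A = A₂) (hB : B = B₂)
    {u : Y.Ver A B} {u₂ : Y.Ver A₂ B₂} (hu : HEq u u₂) :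
    HEq (Y.lunitInv u) (Y.lunitInv u₂) := by
  subst hA; subst hB; obtain rfl := eq_of_heq hu; rfl

theorem runitCongr {A B A₂ B₂ : Y.Obj} (hA : A = A₂) (hB : B = B₂)
    {u : Y.Ver A B} {u₂ : Y.Ver A₂ B₂} (hu : HEq u u₂) :
    HEq (Y.runit u) (Y.runit u₂) := by
  subst hA; subst hB; obtain rfl := eq_of_heq hu; rfl

theorem runitInvCongr {A B A₂ B₂ : Y.Obj} (hA : A = A₂) (hB : B = B₂)
    {u : Y.Ver A B} {u₂ : Y.Ver A₂ B₂} (hu : HEq u u₂) :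
    HEq (Y.runitInv u) (Y.runitInv u₂) := by
  subst hA; subst hB; obtain rfl := eq_of_heq hu; rfl

/-- Collapse a horizontal composite whose left factor is (heterogeneously) an
identity cell. -/
theorem collapseL {A₀ B C A₀' B' C' : Y.Obj}
    {f₀ : Y.Hor A₀ B} {g : Y.Hor B C} {x : Y.Ver A₀ A₀'} {u : Y.Ver B B'}
    {w : Y.Ver C C'} {f₀' : Y.Hor A₀' B'} {g' : Y.Hor B' C'}
    (c : Y.Cell f₀ x u f₀') (α : Y.Cell g u w g')
    (hA : A₀ = B) (hA' : A₀' = B')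
    (hf₀ : HEq f₀ (Y.hid B)) (hx : HEq x u) (hf₀' : HEq f₀' (Y.hid B'))
    (hc : HEq c (Y.cid u)) : HEq (Y.chcomp c α) α := by
  subst hA; subst hA'
  obtain rfl := eq_of_heq hf₀; obtain rfl := eq_of_heq hx; obtain rfl := eq_of_heq hf₀'
  obtain rfl := eq_of_heq hc
  exact Y.cid_chcomp α

/-- Collapse a horizontal composite whose right factor is (heterogeneously) an
identity cell. -/
theorem collapseR {A B C₀ A' B' C₀' : Y.Obj}
    {f : Y.Hor A B} {g : Y.Hor B C₀} {u : Y.Ver A A'} {v : Y.Ver B B'}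
    {w : Y.Ver C₀ C₀'} {f' : Y.Hor A' B'} {g' : Y.Hor B' C₀'}
    (α : Y.Cell f u v f') (c : Y.Cell g v w g')
    (hC : C₀ = B) (hC' : C₀' = B')
    (hg : HEq g (Y.hid B)) (hw : HEq w v) (hg' : HEq g' (Y.hid B'))
    (hc : HEq c (Y.cid v)) : HEq (Y.chcomp α c) α := by
  subst hC; subst hC'
  obtain rfl := eq_of_heq hg; obtain rfl := eq_of_heq hw; obtain rfl := eq_of_heq hg'
  obtain rfl := eq_of_heq hc
  exact Y.chcomp_cid α

/-- Uniqueness of inverses for special cells. -/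
theorem inv_unique {A B : Y.Obj} {x y : Y.Ver A B}
    (a : Y.Cell (Y.hid A) x y (Y.hid B))
    (b b' : Y.Cell (Y.hid A) y x (Y.hid B))
    (hba : HEq (Y.chcomp b a) (Y.cid y)) (hab' : HEq (Y.chcomp a b') (Y.cid x)) :
    b = b' := by
  have e1 : Y.hcomp (Y.hid A) (Y.hid A) = Y.hid A := Y.hid_comp _
  have e2 : Y.hcomp (Y.hid B) (Y.hid B) = Y.hid B := Y.hid_comp _
  have h1 : HEq b' (Y.chcomp (Y.cid y) b') := (Y.cid_chcomp b').symm
  have h2 : HEq (Y.chcomp (Y.cid y) b') (Y.chcomp (Y.chcomp b a) b') :=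
    Y.chcompCongr rfl rfl rfl rfl rfl rfl
      (heq_of_eq e1).symm HEq.rfl HEq.rfl HEq.rfl HEq.rfl (heq_of_eq e2).symm HEq.rfl
      hba.symm HEq.rfl
  have h3 : HEq (Y.chcomp (Y.chcomp b a) b') (Y.chcomp b (Y.chcomp a b')) :=
    Y.chcomp_assoc b a b'
  have h4 : HEq (Y.chcomp b (Y.chcomp a b')) (Y.chcomp b (Y.cid x)) :=
    Y.chcompCongr rfl rfl rfl rfl rfl rfl
      HEq.rfl (heq_of_eq e1) HEq.rfl HEq.rfl HEq.rfl HEq.rfl (heq_of_eq e2)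
      HEq.rfl hab'
  have h5 : HEq (Y.chcomp b (Y.cid x)) b := Y.chcomp_cid b
  exact (eq_of_heq (((h1.trans h2).trans h3).trans (h4.trans h5))).symm

/-- Heterogeneous version of uniqueness of inverses. -/
theorem inv_unique_het {A B : Y.Obj} {x y : Y.Ver A B} {A₀ B₀ : Y.Obj}
    (hA : A₀ = A) (hB : B₀ = B)
    {fa : Y.Hor A₀ A₀} {fb : Y.Hor B₀ B₀} {x₀ y₀ : Y.Ver A₀ B₀}
    (hfa : HEq fa (Y.hid A)) (hfb : HEq fb (Y.hid B))
    (hx : HEq x₀ x) (hy : HEq y₀ y)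
    {a₀ : Y.Cell fa x₀ y₀ fb} {a : Y.Cell (Y.hid A) x y (Y.hid B)} (ha : HEq a₀ a)
    (b : Y.Cell fa y₀ x₀ fb) (b' : Y.Cell (Y.hid A) y x (Y.hid B))
    (hba : HEq (Y.chcomp b a₀) (Y.cid y₀)) (hab' : HEq (Y.chcomp a b') (Y.cid x)) :
    HEq b b' := by
  subst hA; subst hB
  obtain rfl := eq_of_heq hfa; obtain rfl := eq_of_heq hfb
  obtain rfl := eq_of_heq hx; obtain rfl := eq_of_heq hy
  obtain rfl := eq_of_heq ha
  exact heq_of_eq (Y.inv_unique _ b b' hba hab')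

end WeakDoubleCat

namespace LaxDblFunctor

variable {X Y : WeakDoubleCat.{u}} (F : LaxDblFunctor X Y)

theorem objCongr {A A' : X.Obj} (h : A = A') : F.obj A = F.obj A' := by subst h; rfl

theorem hmapCongr {A B A' B' : X.Obj} (hA : A = A') (hB : B = B')
    {f : X.Hor A B} {f' : X.Hor A' B'} (hf : HEq f f') : HEq (F.hmap f) (F.hmap f') := by
  subst hA; subst hB; obtain rfl := eq_of_heq hf; rfl

theorem vmapCongr {A B A' B' : X.Obj} (hA : A = A') (hB : B = B')
    {u : X.Ver A B} {u' : X.Ver A' B'} (hu : HEq u u') : HEq (F.vmap u) (F.vmap u') := by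
  subst hA; subst hB; obtain rfl := eq_of_heq hu; rfl

theorem cmapCongr {A B A' B' A₂ B₂ A₂' B₂' : X.Obj}
    (hA : A = A₂) (hB : B = B₂) (hA' : A' = A₂') (hB' : B' = B₂')
    {f : X.Hor A B} {u : X.Ver A A'} {v : X.Ver B B'} {g : X.Hor A' B'}
    {f₂ : X.Hor A₂ B₂} {u₂ : X.Ver A₂ A₂'} {v₂ : X.Ver B₂ B₂'} {g₂ : X.Hor A₂' B₂'}
    (hf : HEq f f₂) (hu : HEq u u₂) (hv : HEq v v₂) (hg : HEq g g₂)
    {α : X.Cell f u v g} {α₂ : X.Cell f₂ u₂ v₂ g₂} (hα : HEq α α₂) :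
    HEq (F.cmap α) (F.cmap α₂) := by
  subst hA; subst hB; subst hA'; subst hB'
  obtain rfl := eq_of_heq hf; obtain rfl := eq_of_heq hu; obtain rfl := eq_of_heq hv
  obtain rfl := eq_of_heq hg; obtain rfl := eq_of_heq hα; rfl

end LaxDblFunctor

namespace ColaxDblFunctor

variable {X Y : WeakDoubleCat.{u}} (F : ColaxDblFunctor X Y)

theorem objCongr {A A' : X.Obj} (h : A = A') : F.obj A = F.obj A' := by subst h; rfl

theorem hmapCongr {A B A' B' : X.Obj} (hA : A = A') (hB : B = B')
    {f : X.Hor A B} {f' : X.Hor A' B'} (hf : HEq f f') : HEq (F.hmap f) (F.hmap f') := by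
  subst hA; subst hB; obtain rfl := eq_of_heq hf; rfl

theorem vmapCongr {A B A' B' : X.Obj} (hA : A = A') (hB : B = B')
    {u : X.Ver A B} {u' : X.Ver A' B'} (hu : HEq u u') : HEq (F.vmap u) (F.vmap u') := by
  subst hA; subst hB; obtain rfl := eq_of_heq hu; rfl

theorem cmapCongr {A B A' B' A₂ B₂ A₂' B₂' : X.Obj}
    (hA : A = A₂) (hB : B = B₂) (hA' : A' = A₂') (hB' : B' = B₂')
    {f : X.Hor A B} {u : X.Ver A A'} {v : X.Ver B B'} {g : X.Hor A' B'}
    {f₂ : X.Hor A₂ B₂} {u₂ : X.Ver A₂ A₂'} {v₂ : X.Ver B₂ B₂'} {g₂ : X.Hor A₂' B₂'}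
    (hf : HEq f f₂) (hu : HEq u u₂) (hv : HEq v v₂) (hg : HEq g g₂)
    {α : X.Cell f u v g} {α₂ : X.Cell f₂ u₂ v₂ g₂} (hα : HEq α α₂) :
    HEq (F.cmap α) (F.cmap α₂) := by
  subst hA; subst hB; subst hA'; subst hB'
  obtain rfl := eq_of_heq hf; obtain rfl := eq_of_heq hu; obtain rfl := eq_of_heq hv
  obtain rfl := eq_of_heq hg; obtain rfl := eq_of_heq hα; rfl

theorem colaxidCongr {A A' : X.Obj} (h : A = A') : HEq (F.colaxid A) (F.colaxid A') := by
  subst h; rfl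

theorem colaxcompCongr {A B C A' B' C' : X.Obj} (hA : A = A') (hB : B = B') (hC : C = C')
    {u : X.Ver A B} {v : X.Ver B C} {u' : X.Ver A' B'} {v' : X.Ver B' C'}
    (hu : HEq u u') (hv : HEq v v') :
    HEq (F.colaxcomp u v) (F.colaxcomp u' v') := by
  subst hA; subst hB; subst hC
  obtain rfl := eq_of_heq hu; obtain rfl := eq_of_heq hv; rfl

end ColaxDblFunctor


/-! ### Strict lax functors preserve the whole vertical structure -/

namespace LaxDblFunctor

variable {X Y : WeakDoubleCat.{u}} (F : LaxDblFunctor X Y) (hF : F.IsStrict)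

include hF

theorem strict_laxid (A : X.Obj) : HEq (F.laxid A) (Y.cid (F.vmap (X.vid A))) :=
  (hF.2.2.1 A).trans (Y.cidCongr rfl rfl (heq_of_eq (hF.1 A)).symm)

theorem strict_laxcomp {A B C : X.Obj} (u : X.Ver A B) (v : X.Ver B C) :
    HEq (F.laxcomp u v) (Y.cid (F.vmap (X.vcomp u v))) :=
  (hF.2.2.2 u v).trans (Y.cidCongr rfl rfl (heq_of_eq (hF.2.1 u v)).symm)

theorem strict_cmap_idcell {A B : X.Obj} (f : X.Hor A B) :
    HEq (F.cmap (X.idcell f)) (Y.idcell (F.hmap f)) := by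
  have h := F.laxid_nat f
  have hL : HEq (Y.chcomp (F.laxid A) (F.cmap (X.idcell f))) (F.cmap (X.idcell f)) :=
    Y.collapseL _ _ rfl rfl HEq.rfl (heq_of_eq (hF.1 A)).symm HEq.rfl
      (F.strict_laxid hF A)
  have hR : HEq (Y.chcomp (Y.idcell (F.hmap f)) (F.laxid B)) (Y.idcell (F.hmap f)) :=
    Y.collapseR _ _ rfl rfl HEq.rfl (heq_of_eq (hF.1 B)) HEq.rfl (hF.2.2.1 B)
  exact (hL.symm.trans h).trans hR

theorem strict_cmap_cvcomp {A B A' B' A'' B'' : X.Obj} {f : X.Hor A B}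
    {u : X.Ver A A'} {v : X.Ver B B'} {g : X.Hor A' B'}
    {u' : X.Ver A' A''} {v' : X.Ver B' B''} {h : X.Hor A'' B''}
    (α : X.Cell f u v g) (β : X.Cell g u' v' h) :
    HEq (F.cmap (X.cvcomp α β)) (Y.cvcomp (F.cmap α) (F.cmap β)) := by
  have hnat := F.laxcomp_nat α β
  have hL : HEq (Y.chcomp (F.laxcomp u u') (F.cmap (X.cvcomp α β)))
      (F.cmap (X.cvcomp α β)) :=
    Y.collapseL _ _ rfl rfl HEq.rfl (heq_of_eq (hF.2.1 u u')).symm HEq.rfl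
      (F.strict_laxcomp hF u u')
  have hR : HEq (Y.chcomp (Y.cvcomp (F.cmap α) (F.cmap β)) (F.laxcomp v v'))
      (Y.cvcomp (F.cmap α) (F.cmap β)) :=
    Y.collapseR _ _ rfl rfl HEq.rfl (heq_of_eq (hF.2.1 v v')) HEq.rfl (hF.2.2.2 v v')
  exact (hL.symm.trans hnat).trans hR

theorem strict_cmap_vassoc {A B C D : X.Obj} (u : X.Ver A B) (v : X.Ver B C)
    (w : X.Ver C D) :
    HEq (F.cmap (X.vassoc u v w)) (Y.vassoc (F.vmap u) (F.vmap v) (F.vmap w)) := by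
  have h := F.lax_assoc u v w
  set Fu := F.vmap u; set Fv := F.vmap v; set Fw := F.vmap w
  set z := Y.vcomp (Y.vcomp Fu Fv) Fw with hz
  have hc1 : HEq (Y.cvcomp (F.laxcomp u v) (Y.cid Fw)) (Y.cid z) :=
    (Y.cvcompCongr rfl rfl rfl rfl rfl rfl HEq.rfl HEq.rfl
        (heq_of_eq (hF.2.1 u v)) HEq.rfl HEq.rfl HEq.rfl HEq.rfl
        (hF.2.2.2 u v) HEq.rfl).trans
      (heq_of_eq (Y.cid_vcomp _ _))
  have hc2 : HEq (F.laxcomp (X.vcomp u v) w) (Y.cid z) :=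
    (hF.2.2.2 (X.vcomp u v) w).trans
      (Y.cidCongr rfl rfl
        (Y.vcompCongr rfl rfl rfl (heq_of_eq (hF.2.1 u v)) HEq.rfl))
  have hv1 : HEq (Y.vcomp (F.vmap (X.vcomp u v)) Fw) z :=
    Y.vcompCongr rfl rfl rfl (heq_of_eq (hF.2.1 u v)) HEq.rfl
  have hw1 : HEq (F.vmap (X.vcomp (X.vcomp u v) w)) z :=
    (heq_of_eq (hF.2.1 (X.vcomp u v) w)).trans hv1
  have hinner : HEq
      (Y.chcomp (Y.cvcomp (F.laxcomp u v) (Y.cid Fw)) (F.laxcomp (X.vcomp u v) w))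
      (Y.cid z) :=
    (Y.chcompCongr rfl rfl rfl rfl rfl rfl HEq.rfl HEq.rfl HEq.rfl hv1 hw1
        HEq.rfl HEq.rfl hc1 hc2).trans (Y.cid_chcomp (Y.cid z))
  have hLHS : HEq
      (Y.chcomp (Y.vassoc Fu Fv Fw)
        (Y.chcomp (Y.cvcomp (F.laxcomp u v) (Y.cid Fw)) (F.laxcomp (X.vcomp u v) w)))
      (Y.vassoc Fu Fv Fw) :=
    Y.collapseR _ _ rfl rfl (heq_of_eq (Y.hid_comp _)) hw1
      (heq_of_eq (Y.hid_comp _)) hinner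
  have hc3 : HEq (Y.cvcomp (Y.cid Fu) (F.laxcomp v w))
      (Y.cid (Y.vcomp Fu (F.vmap (X.vcomp v w)))) :=
    ((Y.cvcompCongr rfl rfl rfl rfl rfl rfl HEq.rfl HEq.rfl HEq.rfl HEq.rfl
        HEq.rfl (heq_of_eq (hF.2.1 v w)) HEq.rfl HEq.rfl (hF.2.2.2 v w)).trans
      (heq_of_eq (Y.cid_vcomp _ _))).trans
      (Y.cidCongr rfl rfl
        (Y.vcompCongr rfl rfl rfl HEq.rfl (heq_of_eq (hF.2.1 v w)).symm))
  have hR1 : HEq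
      (Y.chcomp (Y.cvcomp (Y.cid Fu) (F.laxcomp v w))
        (Y.chcomp (F.laxcomp u (X.vcomp v w)) (F.cmap (X.vassoc u v w))))
      (Y.chcomp (F.laxcomp u (X.vcomp v w)) (F.cmap (X.vassoc u v w))) :=
    Y.collapseL _ _ rfl rfl HEq.rfl
      (Y.vcompCongr rfl rfl rfl HEq.rfl (heq_of_eq (hF.2.1 v w)).symm)
      HEq.rfl hc3
  have hR2 : HEq (Y.chcomp (F.laxcomp u (X.vcomp v w)) (F.cmap (X.vassoc u v w)))
      (F.cmap (X.vassoc u v w)) :=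
    Y.collapseL _ _ rfl rfl HEq.rfl (heq_of_eq (hF.2.1 u (X.vcomp v w))).symm
      HEq.rfl
      ((hF.2.2.2 u (X.vcomp v w)).trans
        (Y.cidCongr rfl rfl (heq_of_eq (hF.2.1 u (X.vcomp v w))).symm))
  exact ((hLHS.symm.trans h).trans (hR1.trans hR2)).symm

theorem strict_cmap_lunit {A B : X.Obj} (u : X.Ver A B) :
    HEq (F.cmap (X.lunit u)) (Y.lunit (F.vmap u)) := by
  have h := F.lax_lunit u
  have hc5 : HEq (Y.cvcomp (F.laxid A) (Y.cid (F.vmap u)))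
      (Y.cid (Y.vcomp (F.vmap (X.vid A)) (F.vmap u))) :=
    ((Y.cvcompCongr rfl rfl rfl rfl rfl rfl HEq.rfl HEq.rfl
        (heq_of_eq (hF.1 A)) HEq.rfl HEq.rfl HEq.rfl HEq.rfl
        (hF.2.2.1 A) HEq.rfl).trans
      (heq_of_eq (Y.cid_vcomp _ _))).trans
      (Y.cidCongr rfl rfl
        (Y.vcompCongr rfl rfl rfl (heq_of_eq (hF.1 A)).symm HEq.rfl))
  have hL1 : HEq
      (Y.chcomp (Y.cvcomp (F.laxid A) (Y.cid (F.vmap u)))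
        (Y.chcomp (F.laxcomp (X.vid A) u) (F.cmap (X.lunit u))))
      (Y.chcomp (F.laxcomp (X.vid A) u) (F.cmap (X.lunit u))) :=
    Y.collapseL _ _ rfl rfl HEq.rfl
      (Y.vcompCongr rfl rfl rfl (heq_of_eq (hF.1 A)).symm HEq.rfl)
      HEq.rfl hc5
  have hL2 : HEq (Y.chcomp (F.laxcomp (X.vid A) u) (F.cmap (X.lunit u)))
      (F.cmap (X.lunit u)) :=
    Y.collapseL _ _ rfl rfl HEq.rfl (heq_of_eq (hF.2.1 (X.vid A) u)).symm HEq.rfl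
      ((hF.2.2.2 (X.vid A) u).trans
        (Y.cidCongr rfl rfl (heq_of_eq (hF.2.1 (X.vid A) u)).symm))
  exact (hL1.trans hL2).symm.trans h

theorem strict_cmap_runit {A B : X.Obj} (u : X.Ver A B) :
    HEq (F.cmap (X.runit u)) (Y.runit (F.vmap u)) := by
  have h := F.lax_runit u
  have hc6 : HEq (Y.cvcomp (Y.cid (F.vmap u)) (F.laxid B))
      (Y.cid (Y.vcomp (F.vmap u) (F.vmap (X.vid B)))) :=
    ((Y.cvcompCongr rfl rfl rfl rfl rfl rfl HEq.rfl HEq.rfl HEq.rfl HEq.rfl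
        HEq.rfl (heq_of_eq (hF.1 B)) HEq.rfl HEq.rfl (hF.2.2.1 B)).trans
      (heq_of_eq (Y.cid_vcomp _ _))).trans
      (Y.cidCongr rfl rfl
        (Y.vcompCongr rfl rfl rfl HEq.rfl (heq_of_eq (hF.1 B)).symm))
  have hL1 : HEq
      (Y.chcomp (Y.cvcomp (Y.cid (F.vmap u)) (F.laxid B))
        (Y.chcomp (F.laxcomp u (X.vid B)) (F.cmap (X.runit u))))
      (Y.chcomp (F.laxcomp u (X.vid B)) (F.cmap (X.runit u))) :=
    Y.collapseL _ _ rfl rfl HEq.rfl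
      (Y.vcompCongr rfl rfl rfl HEq.rfl (heq_of_eq (hF.1 B)).symm)
      HEq.rfl hc6
  have hL2 : HEq (Y.chcomp (F.laxcomp u (X.vid B)) (F.cmap (X.runit u)))
      (F.cmap (X.runit u)) :=
    Y.collapseL _ _ rfl rfl HEq.rfl (heq_of_eq (hF.2.1 u (X.vid B))).symm HEq.rfl
      ((hF.2.2.2 u (X.vid B)).trans
        (Y.cidCongr rfl rfl (heq_of_eq (hF.2.1 u (X.vid B))).symm))
  exact (hL1.trans hL2).symm.trans h

theorem strict_cmap_vassocInv {A B C D : X.Obj} (u : X.Ver A B) (v : X.Ver B C)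
    (w : X.Ver C D) :
    HEq (F.cmap (X.vassocInv u v w))
      (Y.vassocInv (F.vmap u) (F.vmap v) (F.vmap w)) := by
  refine Y.inv_unique_het rfl rfl (heq_of_eq (F.hmap_id A)) (heq_of_eq (F.hmap_id D))
    ((heq_of_eq (hF.2.1 u (X.vcomp v w))).trans
      (Y.vcompCongr rfl rfl rfl HEq.rfl (heq_of_eq (hF.2.1 v w))))
    ((heq_of_eq (hF.2.1 (X.vcomp u v) w)).trans
      (Y.vcompCongr rfl rfl rfl (heq_of_eq (hF.2.1 u v)) HEq.rfl))
    (F.strict_cmap_vassoc hF u v w) _ _ ?_ (Y.vassoc_vassocInv _ _ _)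
  exact (F.cmap_chcomp _ _).symm.trans
    ((F.cmapCongr rfl rfl rfl rfl (heq_of_eq (X.hid_comp _)) HEq.rfl HEq.rfl
        (heq_of_eq (X.hid_comp _)) (X.vassocInv_vassoc u v w)).trans
      (F.cmap_cid _))

theorem strict_cmap_lunitInv {A B : X.Obj} (u : X.Ver A B) :
    HEq (F.cmap (X.lunitInv u)) (Y.lunitInv (F.vmap u)) := by
  refine Y.inv_unique_het rfl rfl (heq_of_eq (F.hmap_id A)) (heq_of_eq (F.hmap_id B))
    ((heq_of_eq (hF.2.1 (X.vid A) u)).trans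
      (Y.vcompCongr rfl rfl rfl (heq_of_eq (hF.1 A)) HEq.rfl))
    HEq.rfl (F.strict_cmap_lunit hF u) _ _ ?_ (Y.lunit_lunitInv _)
  exact (F.cmap_chcomp _ _).symm.trans
    ((F.cmapCongr rfl rfl rfl rfl (heq_of_eq (X.hid_comp _)) HEq.rfl HEq.rfl
        (heq_of_eq (X.hid_comp _)) (X.lunitInv_lunit u)).trans
      (F.cmap_cid _))

theorem strict_cmap_runitInv {A B : X.Obj} (u : X.Ver A B) :
    HEq (F.cmap (X.runitInv u)) (Y.runitInv (F.vmap u)) := by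
  refine Y.inv_unique_het rfl rfl (heq_of_eq (F.hmap_id A)) (heq_of_eq (F.hmap_id B))
    ((heq_of_eq (hF.2.1 u (X.vid B))).trans
      (Y.vcompCongr rfl rfl rfl HEq.rfl (heq_of_eq (hF.1 B))))
    HEq.rfl (F.strict_cmap_runit hF u) _ _ ?_ (Y.runit_runitInv _)
  exact (F.cmap_chcomp _ _).symm.trans
    ((F.cmapCongr rfl rfl rfl rfl (heq_of_eq (X.hid_comp _)) HEq.rfl HEq.rfl
        (heq_of_eq (X.hid_comp _)) (X.runitInv_runit u)).trans
      (F.cmap_cid _))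

end LaxDblFunctor

/-! ### The canonical set-theoretical pullback weak double category -/

section PB

variable {DA DB DC : WeakDoubleCat.{u}} (F : LaxDblFunctor DA DC) (G : LaxDblFunctor DB DC)

theorem pbHor_ext {X Y : (pbData F G).Obj} {f g : (pbData F G).Hor X Y}
    (h1 : f.val.1 = g.val.1) (h2 : f.val.2 = g.val.2) : f = g :=
  Subtype.ext (Prod.ext_iff.mpr ⟨h1, h2⟩)

theorem pbVer_ext {X Y : (pbData F G).Obj} {f g : (pbData F G).Ver X Y}
    (h1 : f.val.1 = g.val.1) (h2 : f.val.2 = g.val.2) : f = g :=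
  Subtype.ext (Prod.ext_iff.mpr ⟨h1, h2⟩)

theorem pbCell_ext {X Y X₂ Y₂ : (pbData F G).Obj}
    {f : (pbData F G).Hor X Y} {u : (pbData F G).Ver X X₂} {v : (pbData F G).Ver Y Y₂}
    {g : (pbData F G).Hor X₂ Y₂} {α β : (pbData F G).Cell f u v g}
    (h1 : α.val.1 = β.val.1) (h2 : α.val.2 = β.val.2) : α = β :=
  Subtype.ext (Prod.ext_iff.mpr ⟨h1, h2⟩)

theorem pbHor_heq {X Y X' Y' : (pbData F G).Obj} (hX : X = X') (hY : Y = Y')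
    {f : (pbData F G).Hor X Y} {g : (pbData F G).Hor X' Y'}
    (h1 : HEq f.val.1 g.val.1) (h2 : HEq f.val.2 g.val.2) : HEq f g := by
  subst hX; subst hY
  exact heq_of_eq (pbHor_ext F G (eq_of_heq h1) (eq_of_heq h2))

theorem pbVer_heq {X Y X' Y' : (pbData F G).Obj} (hX : X = X') (hY : Y = Y')
    {f : (pbData F G).Ver X Y} {g : (pbData F G).Ver X' Y'}
    (h1 : HEq f.val.1 g.val.1) (h2 : HEq f.val.2 g.val.2) : HEq f g := by
  subst hX; subst hY
  exact heq_of_eq (pbVer_ext F G (eq_of_heq h1) (eq_of_heq h2))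

theorem pbCell_heq {X Y X₂ Y₂ X' Y' X₂' Y₂' : (pbData F G).Obj}
    (hX : X = X') (hY : Y = Y') (hX₂ : X₂ = X₂') (hY₂ : Y₂ = Y₂')
    {f : (pbData F G).Hor X Y} {u : (pbData F G).Ver X X₂} {v : (pbData F G).Ver Y Y₂}
    {g : (pbData F G).Hor X₂ Y₂}
    {f' : (pbData F G).Hor X' Y'} {u' : (pbData F G).Ver X' X₂'}
    {v' : (pbData F G).Ver Y' Y₂'} {g' : (pbData F G).Hor X₂' Y₂'}
    (hf : HEq f f') (hu : HEq u u') (hv : HEq v v') (hg : HEq g g')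
    {α : (pbData F G).Cell f u v g} {β : (pbData F G).Cell f' u' v' g'}
    (h1 : HEq α.val.1 β.val.1) (h2 : HEq α.val.2 β.val.2) : HEq α β := by
  subst hX; subst hY; subst hX₂; subst hY₂
  obtain rfl := eq_of_heq hf; obtain rfl := eq_of_heq hu
  obtain rfl := eq_of_heq hv; obtain rfl := eq_of_heq hg
  exact heq_of_eq (pbCell_ext F G (eq_of_heq h1) (eq_of_heq h2))

theorem pbCell_heq_comps {X Y X₂ Y₂ X' Y' X₂' Y₂' : (pbData F G).Obj}
    (hX : X = X') (hY : Y = Y') (hX₂ : X₂ = X₂') (hY₂ : Y₂ = Y₂')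
    {f : (pbData F G).Hor X Y} {u : (pbData F G).Ver X X₂} {v : (pbData F G).Ver Y Y₂}
    {g : (pbData F G).Hor X₂ Y₂}
    {f' : (pbData F G).Hor X' Y'} {u' : (pbData F G).Ver X' X₂'}
    {v' : (pbData F G).Ver Y' Y₂'} {g' : (pbData F G).Hor X₂' Y₂'}
    (hf : HEq f f') (hu : HEq u u') (hv : HEq v v') (hg : HEq g g')
    {α : (pbData F G).Cell f u v g} {β : (pbData F G).Cell f' u' v' g'}
    (h : HEq α β) : HEq α.val.1 β.val.1 ∧ HEq α.val.2 β.val.2 := by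
  subst hX; subst hY; subst hX₂; subst hY₂
  obtain rfl := eq_of_heq hf; obtain rfl := eq_of_heq hu
  obtain rfl := eq_of_heq hv; obtain rfl := eq_of_heq hg
  obtain rfl := eq_of_heq h
  exact ⟨HEq.rfl, HEq.rfl⟩

/-! Operations of the pullback double category. -/

def pbHid (X : (pbData F G).Obj) : (pbData F G).Hor X X :=
  ⟨(DA.hid X.val.1, DB.hid X.val.2),
    (heq_of_eq (F.hmap_id _)).trans
      ((DC.hidCongr X.prop).trans (heq_of_eq (G.hmap_id _)).symm)⟩

def pbHcomp {X Y Z : (pbData F G).Obj} (f : (pbData F G).Hor X Y)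
    (g : (pbData F G).Hor Y Z) : (pbData F G).Hor X Z :=
  ⟨(DA.hcomp f.val.1 g.val.1, DB.hcomp f.val.2 g.val.2),
    (heq_of_eq (F.hmap_comp _ _)).trans
      ((DC.hcompCongr X.prop Y.prop Z.prop f.prop g.prop).trans
        (heq_of_eq (G.hmap_comp _ _)).symm)⟩

variable (hF : F.IsStrict) (hG : G.IsStrict)

def pbVid (X : (pbData F G).Obj) : (pbData F G).Ver X X :=
  ⟨(DA.vid X.val.1, DB.vid X.val.2),
    (heq_of_eq (hF.1 _)).trans
      ((DC.vidCongr X.prop).trans (heq_of_eq (hG.1 _)).symm)⟩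

def pbVcomp {X Y Z : (pbData F G).Obj} (u : (pbData F G).Ver X Y)
    (v : (pbData F G).Ver Y Z) : (pbData F G).Ver X Z :=
  ⟨(DA.vcomp u.val.1 v.val.1, DB.vcomp u.val.2 v.val.2),
    (heq_of_eq (hF.2.1 _ _)).trans
      ((DC.vcompCongr X.prop Y.prop Z.prop u.prop v.prop).trans
        (heq_of_eq (hG.2.1 _ _)).symm)⟩

def pbCid {X Y : (pbData F G).Obj} (u : (pbData F G).Ver X Y) :
    (pbData F G).Cell (pbHid F G X) u u (pbHid F G Y) :=
  ⟨(DA.cid u.val.1, DB.cid u.val.2),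
    (F.cmap_cid _).trans
      ((DC.cidCongr X.prop Y.prop u.prop).trans (G.cmap_cid _).symm)⟩

def pbChcomp {X Y Z X₂ Y₂ Z₂ : (pbData F G).Obj}
    {f : (pbData F G).Hor X Y} {g : (pbData F G).Hor Y Z}
    {u : (pbData F G).Ver X X₂} {v : (pbData F G).Ver Y Y₂} {w : (pbData F G).Ver Z Z₂}
    {f' : (pbData F G).Hor X₂ Y₂} {g' : (pbData F G).Hor Y₂ Z₂}
    (α : (pbData F G).Cell f u v f') (β : (pbData F G).Cell g v w g') :
    (pbData F G).Cell (pbHcomp F G f g) u w (pbHcomp F G f' g') :=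
  ⟨(DA.chcomp α.val.1 β.val.1, DB.chcomp α.val.2 β.val.2),
    (F.cmap_chcomp _ _).trans
      ((DC.chcompCongr X.prop Y.prop Z.prop X₂.prop Y₂.prop Z₂.prop
          f.prop g.prop u.prop v.prop w.prop f'.prop g'.prop α.prop β.prop).trans
        (G.cmap_chcomp _ _).symm)⟩

def pbIdcell {X Y : (pbData F G).Obj} (f : (pbData F G).Hor X Y) :
    (pbData F G).Cell f (pbVid F G hF hG X) (pbVid F G hF hG Y) f :=
  ⟨(DA.idcell f.val.1, DB.idcell f.val.2),
    (F.strict_cmap_idcell hF _).trans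
      ((DC.idcellCongr X.prop Y.prop f.prop).trans
        (G.strict_cmap_idcell hG _).symm)⟩

def pbCvcomp {X Y X₂ Y₂ X₃ Y₃ : (pbData F G).Obj}
    {f : (pbData F G).Hor X Y} {u : (pbData F G).Ver X X₂} {v : (pbData F G).Ver Y Y₂}
    {g : (pbData F G).Hor X₂ Y₂} {u' : (pbData F G).Ver X₂ X₃}
    {v' : (pbData F G).Ver Y₂ Y₃} {h : (pbData F G).Hor X₃ Y₃}
    (α : (pbData F G).Cell f u v g) (β : (pbData F G).Cell g u' v' h) :
    (pbData F G).Cell f (pbVcomp F G hF hG u u') (pbVcomp F G hF hG v v') h :=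
  ⟨(DA.cvcomp α.val.1 β.val.1, DB.cvcomp α.val.2 β.val.2),
    (F.strict_cmap_cvcomp hF _ _).trans
      ((DC.cvcompCongr X.prop Y.prop X₂.prop Y₂.prop X₃.prop Y₃.prop
          f.prop u.prop v.prop g.prop u'.prop v'.prop h.prop α.prop β.prop).trans
        (G.strict_cmap_cvcomp hG _ _).symm)⟩

def pbVassoc {X Y Z W : (pbData F G).Obj} (u : (pbData F G).Ver X Y)
    (v : (pbData F G).Ver Y Z) (w : (pbData F G).Ver Z W) :
    (pbData F G).Cell (pbHid F G X)
      (pbVcomp F G hF hG u (pbVcomp F G hF hG v w))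
      (pbVcomp F G hF hG (pbVcomp F G hF hG u v) w) (pbHid F G W) :=
  ⟨(DA.vassoc u.val.1 v.val.1 w.val.1, DB.vassoc u.val.2 v.val.2 w.val.2),
    (F.strict_cmap_vassoc hF _ _ _).trans
      ((DC.vassocCongr X.prop Y.prop Z.prop W.prop u.prop v.prop w.prop).trans
        (G.strict_cmap_vassoc hG _ _ _).symm)⟩

def pbVassocInv {X Y Z W : (pbData F G).Obj} (u : (pbData F G).Ver X Y)
    (v : (pbData F G).Ver Y Z) (w : (pbData F G).Ver Z W) :
    (pbData F G).Cell (pbHid F G X)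
      (pbVcomp F G hF hG (pbVcomp F G hF hG u v) w)
      (pbVcomp F G hF hG u (pbVcomp F G hF hG v w)) (pbHid F G W) :=
  ⟨(DA.vassocInv u.val.1 v.val.1 w.val.1, DB.vassocInv u.val.2 v.val.2 w.val.2),
    (F.strict_cmap_vassocInv hF _ _ _).trans
      ((DC.vassocInvCongr X.prop Y.prop Z.prop W.prop u.prop v.prop w.prop).trans
        (G.strict_cmap_vassocInv hG _ _ _).symm)⟩

def pbLunit {X Y : (pbData F G).Obj} (u : (pbData F G).Ver X Y) :
    (pbData F G).Cell (pbHid F G X) (pbVcomp F G hF hG (pbVid F G hF hG X) u) u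
      (pbHid F G Y) :=
  ⟨(DA.lunit u.val.1, DB.lunit u.val.2),
    (F.strict_cmap_lunit hF _).trans
      ((DC.lunitCongr X.prop Y.prop u.prop).trans
        (G.strict_cmap_lunit hG _).symm)⟩

def pbLunitInv {X Y : (pbData F G).Obj} (u : (pbData F G).Ver X Y) :
    (pbData F G).Cell (pbHid F G X) u (pbVcomp F G hF hG (pbVid F G hF hG X) u)
      (pbHid F G Y) :=
  ⟨(DA.lunitInv u.val.1, DB.lunitInv u.val.2),
    (F.strict_cmap_lunitInv hF _).trans
      ((DC.lunitInvCongr X.prop Y.prop u.prop).trans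
        (G.strict_cmap_lunitInv hG _).symm)⟩

def pbRunit {X Y : (pbData F G).Obj} (u : (pbData F G).Ver X Y) :
    (pbData F G).Cell (pbHid F G X) (pbVcomp F G hF hG u (pbVid F G hF hG Y)) u
      (pbHid F G Y) :=
  ⟨(DA.runit u.val.1, DB.runit u.val.2),
    (F.strict_cmap_runit hF _).trans
      ((DC.runitCongr X.prop Y.prop u.prop).trans
        (G.strict_cmap_runit hG _).symm)⟩

def pbRunitInv {X Y : (pbData F G).Obj} (u : (pbData F G).Ver X Y) :
    (pbData F G).Cell (pbHid F G X) u (pbVcomp F G hF hG u (pbVid F G hF hG Y))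
      (pbHid F G Y) :=
  ⟨(DA.runitInv u.val.1, DB.runitInv u.val.2),
    (F.strict_cmap_runitInv hF _).trans
      ((DC.runitInvCongr X.prop Y.prop u.prop).trans
        (G.strict_cmap_runitInv hG _).symm)⟩

theorem pbHid_comp {X Y : (pbData F G).Obj} (f : (pbData F G).Hor X Y) :
    pbHcomp F G (pbHid F G X) f = f :=
  pbHor_ext F G (DA.hid_comp _) (DB.hid_comp _)

theorem pbHcomp_id {X Y : (pbData F G).Obj} (f : (pbData F G).Hor X Y) :
    pbHcomp F G f (pbHid F G Y) = f :=
  pbHor_ext F G (DA.hcomp_id _) (DB.hcomp_id _)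

theorem pbHassoc {X Y Z W : (pbData F G).Obj} (f : (pbData F G).Hor X Y)
    (g : (pbData F G).Hor Y Z) (h : (pbData F G).Hor Z W) :
    pbHcomp F G (pbHcomp F G f g) h = pbHcomp F G f (pbHcomp F G g h) :=
  pbHor_ext F G (DA.hassoc _ _ _) (DB.hassoc _ _ _)

/-- The canonical weak double category structure on the set-theoretical
pullback of two strict functors. -/
def pbCat : WeakDoubleCat.{u} where
  toDblData := pbData F G
  hid := pbHid F G
  hcomp := pbHcomp F G
  hid_comp := pbHid_comp F G
  hcomp_id := pbHcomp_id F G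
  hassoc := pbHassoc F G
  cid := pbCid F G
  chcomp := pbChcomp F G
  cid_chcomp α := pbCell_heq F G rfl rfl rfl rfl
    (heq_of_eq (pbHid_comp F G _)) HEq.rfl HEq.rfl (heq_of_eq (pbHid_comp F G _))
    (DA.cid_chcomp _) (DB.cid_chcomp _)
  chcomp_cid α := pbCell_heq F G rfl rfl rfl rfl
    (heq_of_eq (pbHcomp_id F G _)) HEq.rfl HEq.rfl (heq_of_eq (pbHcomp_id F G _))
    (DA.chcomp_cid _) (DB.chcomp_cid _)
  chcomp_assoc α β γ := pbCell_heq F G rfl rfl rfl rfl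
    (heq_of_eq (pbHassoc F G _ _ _)) HEq.rfl HEq.rfl (heq_of_eq (pbHassoc F G _ _ _))
    (DA.chcomp_assoc _ _ _) (DB.chcomp_assoc _ _ _)
  vid := pbVid F G hF hG
  vcomp := pbVcomp F G hF hG
  idcell := pbIdcell F G hF hG
  cvcomp := pbCvcomp F G hF hG
  idcell_hid X := pbCell_ext F G (DA.idcell_hid _) (DB.idcell_hid _)
  idcell_hcomp f g := pbCell_ext F G (DA.idcell_hcomp _ _) (DB.idcell_hcomp _ _)
  cid_vcomp u v := pbCell_ext F G (DA.cid_vcomp _ _) (DB.cid_vcomp _ _)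
  interchange α β γ δ := pbCell_ext F G
    (DA.interchange _ _ _ _) (DB.interchange _ _ _ _)
  vassoc := pbVassoc F G hF hG
  vassocInv := pbVassocInv F G hF hG
  vassoc_vassocInv u v w := pbCell_heq F G rfl rfl rfl rfl
    (heq_of_eq (pbHid_comp F G _)) HEq.rfl HEq.rfl (heq_of_eq (pbHid_comp F G _))
    (DA.vassoc_vassocInv _ _ _) (DB.vassoc_vassocInv _ _ _)
  vassocInv_vassoc u v w := pbCell_heq F G rfl rfl rfl rfl
    (heq_of_eq (pbHid_comp F G _)) HEq.rfl HEq.rfl (heq_of_eq (pbHid_comp F G _))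
    (DA.vassocInv_vassoc _ _ _) (DB.vassocInv_vassoc _ _ _)
  lunit := pbLunit F G hF hG
  lunitInv := pbLunitInv F G hF hG
  lunit_lunitInv u := pbCell_heq F G rfl rfl rfl rfl
    (heq_of_eq (pbHid_comp F G _)) HEq.rfl HEq.rfl (heq_of_eq (pbHid_comp F G _))
    (DA.lunit_lunitInv _) (DB.lunit_lunitInv _)
  lunitInv_lunit u := pbCell_heq F G rfl rfl rfl rfl
    (heq_of_eq (pbHid_comp F G _)) HEq.rfl HEq.rfl (heq_of_eq (pbHid_comp F G _))
    (DA.lunitInv_lunit _) (DB.lunitInv_lunit _)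
  runit := pbRunit F G hF hG
  runitInv := pbRunitInv F G hF hG
  runit_runitInv u := pbCell_heq F G rfl rfl rfl rfl
    (heq_of_eq (pbHid_comp F G _)) HEq.rfl HEq.rfl (heq_of_eq (pbHid_comp F G _))
    (DA.runit_runitInv _) (DB.runit_runitInv _)
  runitInv_runit u := pbCell_heq F G rfl rfl rfl rfl
    (heq_of_eq (pbHid_comp F G _)) HEq.rfl HEq.rfl (heq_of_eq (pbHid_comp F G _))
    (DA.runitInv_runit _) (DB.runitInv_runit _)
  vassoc_nat α β γ := pbCell_heq F G rfl rfl rfl rfl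
    (heq_of_eq ((pbHid_comp F G _).trans (pbHcomp_id F G _).symm)) HEq.rfl HEq.rfl
    (heq_of_eq ((pbHid_comp F G _).trans (pbHcomp_id F G _).symm))
    (DA.vassoc_nat _ _ _) (DB.vassoc_nat _ _ _)
  lunit_nat α := pbCell_heq F G rfl rfl rfl rfl
    (heq_of_eq ((pbHid_comp F G _).trans (pbHcomp_id F G _).symm)) HEq.rfl HEq.rfl
    (heq_of_eq ((pbHid_comp F G _).trans (pbHcomp_id F G _).symm))
    (DA.lunit_nat _) (DB.lunit_nat _)
  runit_nat α := pbCell_heq F G rfl rfl rfl rfl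
    (heq_of_eq ((pbHid_comp F G _).trans (pbHcomp_id F G _).symm)) HEq.rfl HEq.rfl
    (heq_of_eq ((pbHid_comp F G _).trans (pbHcomp_id F G _).symm))
    (DA.runit_nat _) (DB.runit_nat _)
  pentagon u v w x := pbCell_heq F G rfl rfl rfl rfl
    (heq_of_eq ((pbHid_comp F G _).trans
      ((congrArg (fun t => pbHcomp F G (pbHid F G _) t) (pbHid_comp F G _)).trans
        (pbHid_comp F G _)).symm))
    HEq.rfl HEq.rfl
    (heq_of_eq ((pbHid_comp F G _).trans
      ((congrArg (fun t => pbHcomp F G (pbHid F G _) t) (pbHid_comp F G _)).trans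
        (pbHid_comp F G _)).symm))
    (DA.pentagon _ _ _ _) (DB.pentagon _ _ _ _)
  triangle u v := pbCell_heq F G rfl rfl rfl rfl
    (heq_of_eq (pbHid_comp F G _)) HEq.rfl HEq.rfl (heq_of_eq (pbHid_comp F G _))
    (DA.triangle _ _) (DB.triangle _ _)

/-- First projection from the canonical pullback. -/
def pbPr1 : LaxDblFunctor (pbCat F G hF hG) DA where
  obj X := X.val.1
  hmap f := f.val.1
  vmap u := u.val.1
  cmap α := α.val.1
  hmap_id _ := rfl
  hmap_comp _ _ := rfl
  cmap_cid _ := HEq.rfl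
  cmap_chcomp _ _ := HEq.rfl
  laxid X := DA.cid (DA.vid X.val.1)
  laxcomp u v := DA.cid (DA.vcomp u.val.1 v.val.1)
  laxid_nat f := (DA.cid_chcomp _).trans (DA.chcomp_cid _).symm
  laxcomp_nat α β := (DA.cid_chcomp _).trans (DA.chcomp_cid _).symm
  lax_lunit u := by
    erw [DA.cid_vcomp]
    exact (DA.cid_chcomp _).trans (DA.cid_chcomp _)
  lax_runit u := by
    erw [DA.cid_vcomp]
    exact (DA.cid_chcomp _).trans (DA.cid_chcomp _)
  lax_assoc u v w := by
    refine HEq.trans (b := DA.vassoc u.val.1 v.val.1 w.val.1) ?_ ?_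
    · exact DA.collapseR _ _ rfl rfl (heq_of_eq (DA.hid_comp _)) HEq.rfl
        (heq_of_eq (DA.hid_comp _))
        ((DA.chcompCongr rfl rfl rfl rfl rfl rfl HEq.rfl HEq.rfl HEq.rfl HEq.rfl
          HEq.rfl HEq.rfl HEq.rfl (heq_of_eq (DA.cid_vcomp _ _)) HEq.rfl).trans
          (DA.cid_chcomp _))
    · refine HEq.symm ?_
      refine HEq.trans (DA.collapseL _ _ rfl rfl HEq.rfl HEq.rfl HEq.rfl
        (heq_of_eq (DA.cid_vcomp _ _))) ?_
      exact DA.collapseL _ _ rfl rfl HEq.rfl HEq.rfl HEq.rfl HEq.rfl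

/-- Second projection from the canonical pullback. -/
def pbPr2 : LaxDblFunctor (pbCat F G hF hG) DB where
  obj X := X.val.2
  hmap f := f.val.2
  vmap u := u.val.2
  cmap α := α.val.2
  hmap_id _ := rfl
  hmap_comp _ _ := rfl
  cmap_cid _ := HEq.rfl
  cmap_chcomp _ _ := HEq.rfl
  laxid X := DB.cid (DB.vid X.val.2)
  laxcomp u v := DB.cid (DB.vcomp u.val.2 v.val.2)
  laxid_nat f := (DB.cid_chcomp _).trans (DB.chcomp_cid _).symm
  laxcomp_nat α β := (DB.cid_chcomp _).trans (DB.chcomp_cid _).symm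
  lax_lunit u := by
    erw [DB.cid_vcomp]
    exact (DB.cid_chcomp _).trans (DB.cid_chcomp _)
  lax_runit u := by
    erw [DB.cid_vcomp]
    exact (DB.cid_chcomp _).trans (DB.cid_chcomp _)
  lax_assoc u v w := by
    refine HEq.trans (b := DB.vassoc u.val.2 v.val.2 w.val.2) ?_ ?_
    · exact DB.collapseR _ _ rfl rfl (heq_of_eq (DB.hid_comp _)) HEq.rfl
        (heq_of_eq (DB.hid_comp _))
        ((DB.chcompCongr rfl rfl rfl rfl rfl rfl HEq.rfl HEq.rfl HEq.rfl HEq.rfl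
          HEq.rfl HEq.rfl HEq.rfl (heq_of_eq (DB.cid_vcomp _ _)) HEq.rfl).trans
          (DB.cid_chcomp _))
    · refine HEq.symm ?_
      refine HEq.trans (DB.collapseL _ _ rfl rfl HEq.rfl HEq.rfl HEq.rfl
        (heq_of_eq (DB.cid_vcomp _ _))) ?_
      exact DB.collapseL _ _ rfl rfl HEq.rfl HEq.rfl HEq.rfl HEq.rfl

theorem pbPr1_strict : (pbPr1 F G hF hG).IsStrict :=
  ⟨fun _ => rfl, fun _ _ => rfl, fun _ => HEq.rfl, fun _ _ => HEq.rfl⟩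

theorem pbPr2_strict : (pbPr2 F G hF hG).IsStrict :=
  ⟨fun _ => rfl, fun _ _ => rfl, fun _ => HEq.rfl, fun _ _ => HEq.rfl⟩

end PB


set_option maxHeartbeats 2000000 in
/-- Rigidity: any weak double category structure on the set-theoretic pullback
carrier for which the projections are strict lax functors coincides with the
canonical one. -/
theorem pullback_rigid {DA DB DC : WeakDoubleCat.{u}} {F : LaxDblFunctor DA DC}
    {G : LaxDblFunctor DB DC} (hF : F.IsStrict) (hG : G.IsStrict)
    {P : WeakDoubleCat.{u}} {hcar : P.toDblData = pbData F G}
    {p : LaxDblFunctor P DA} {q : LaxDblFunctor P DB}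
    (h : IsSetPullback F G P hcar p q) :
    P = pbCat F G hF hG ∧ HEq p (pbPr1 F G hF hG) ∧ HEq q (pbPr2 F G hF hG) := by
  obtain ⟨hps, hqs, hpobj, hqobj, hphm, hqhm, hpvm, hqvm, hpcm, hqcm⟩ := h
  obtain ⟨hpv1, hpv2, hpv3, hpv4⟩ := hps
  obtain ⟨hqv1, hqv2, hqv3, hqv4⟩ := hqs
  obtain ⟨data, PHid, PHcomp, Phic, Phci, Phas, PCid, PChc, Pccl, Pccr, Pcca,
    PVid, PVcomp, PIdc, PCvc, Pih, Pihc, Pcv, Pint, PVas, PVasI, Pvv, Pvv2,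
    PLun, PLunI, Pll, Pll2, PRun, PRunI, Prr, Prr2, Pvn, Pln, Prn, Ppent, Ptri⟩ := P
  cases hcar
  obtain ⟨pobj, phm, pvm, pcm, phmap_id, phmap_comp, pcmap_cid, pcmap_chcomp,
    plaxid, plaxcomp, plaxid_nat, plaxcomp_nat, plax_lunit, plax_runit,
    plax_assoc⟩ := p
  obtain ⟨qobj, qhm, qvm, qcm, qhmap_id, qhmap_comp, qcmap_cid, qcmap_chcomp,
    qlaxid, qlaxcomp, qlaxid_nat, qlaxcomp_nat, qlax_lunit, qlax_runit,
    qlax_assoc⟩ := q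
  -- pin the underlying maps of the projections
  have hpo : pobj = fun x => x.val.1 := funext fun x => hpobj x
  subst hpo
  have hqo : qobj = fun x => x.val.2 := funext fun x => hqobj x
  subst hqo
  have hph : @phm = fun (X Y : (pbData F G).Obj) (f : (pbData F G).Hor X Y) =>
      f.val.1 := eq_of_heq hphm
  subst hph
  have hqh : @qhm = fun (X Y : (pbData F G).Obj) (f : (pbData F G).Hor X Y) =>
      f.val.2 := eq_of_heq hqhm
  subst hqh
  have hpv : @pvm = fun (X Y : (pbData F G).Obj) (u : (pbData F G).Ver X Y) =>
      u.val.1 := eq_of_heq hpvm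
  subst hpv
  have hqv : @qvm = fun (X Y : (pbData F G).Obj) (u : (pbData F G).Ver X Y) =>
      u.val.2 := eq_of_heq hqvm
  subst hqv
  have hpc : @pcm = fun (X Y X' Y' : (pbData F G).Obj) (f : (pbData F G).Hor X Y)
      (u : (pbData F G).Ver X X') (v : (pbData F G).Ver Y Y')
      (g : (pbData F G).Hor X' Y') (α : (pbData F G).Cell f u v g) =>
      α.val.1 := eq_of_heq hpcm
  subst hpc
  have hqc : @qcm = fun (X Y X' Y' : (pbData F G).Obj) (f : (pbData F G).Hor X Y)
      (u : (pbData F G).Ver X X') (v : (pbData F G).Ver Y Y')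
      (g : (pbData F G).Hor X' Y') (α : (pbData F G).Cell f u v g) =>
      α.val.2 := eq_of_heq hqcm
  subst hqc
  -- pin the operations of `P`
  have hPVid : PVid = pbVid F G hF hG :=
    funext fun X => pbVer_ext F G (hpv1 X) (hqv1 X)
  subst hPVid
  have hPHid : PHid = pbHid F G :=
    funext fun X => pbHor_ext F G (phmap_id X) (qhmap_id X)
  subst hPHid
  have hPHcomp : @PHcomp = @pbHcomp _ _ _ F G := by
    funext X Y Z f g
    exact pbHor_ext F G (phmap_comp f g) (qhmap_comp f g)
  subst hPHcomp
  have hPVcomp : @PVcomp = @pbVcomp _ _ _ F G hF hG := by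
    funext X Y Z u v
    exact pbVer_ext F G (hpv2 u v) (hqv2 u v)
  subst hPVcomp
  have hPCid : @PCid = @pbCid _ _ _ F G := by
    funext X Y u
    exact pbCell_ext F G (eq_of_heq (pcmap_cid u)) (eq_of_heq (qcmap_cid u))
  subst hPCid
  have hPChc : @PChc = @pbChcomp _ _ _ F G := by
    funext A B C A2 B2 C2 f g u v w f2 g2 α β
    exact pbCell_ext F G (eq_of_heq (pcmap_chcomp α β)) (eq_of_heq (qcmap_chcomp α β))
  subst hPChc
  -- pin the comparison cells of the projections
  have hplaxid : @plaxid = fun (X : (pbData F G).Obj) => DA.cid (DA.vid X.val.1) := by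
    funext X; exact eq_of_heq (hpv3 X)
  subst hplaxid
  have hqlaxid : @qlaxid = fun (X : (pbData F G).Obj) => DB.cid (DB.vid X.val.2) := by
    funext X; exact eq_of_heq (hqv3 X)
  subst hqlaxid
  have hplaxcomp : @plaxcomp = fun (X Y Z : (pbData F G).Obj)
      (u : (pbData F G).Ver X Y) (v : (pbData F G).Ver Y Z) =>
      DA.cid (DA.vcomp u.val.1 v.val.1) := by
    funext X Y Z u v; exact eq_of_heq (hpv4 u v)
  subst hplaxcomp
  have hqlaxcomp : @qlaxcomp = fun (X Y Z : (pbData F G).Obj)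
      (u : (pbData F G).Ver X Y) (v : (pbData F G).Ver Y Z) =>
      DB.cid (DB.vcomp u.val.2 v.val.2) := by
    funext X Y Z u v; exact eq_of_heq (hqv4 u v)
  subst hqlaxcomp
  -- pin the remaining operations of `P`
  have hPIdc : @PIdc = @pbIdcell _ _ _ F G hF hG := by
    funext X Y f
    refine pbCell_ext F G ?_ ?_
    · exact eq_of_heq
        (((DA.cid_chcomp _).symm.trans (plaxid_nat f)).trans (DA.chcomp_cid _))
    · exact eq_of_heq
        (((DB.cid_chcomp _).symm.trans (qlaxid_nat f)).trans (DB.chcomp_cid _))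
  subst hPIdc
  have hPCvc : @PCvc = @pbCvcomp _ _ _ F G hF hG := by
    funext X Y X2 Y2 X3 Y3 f u v g u2 v2 hh α β
    refine pbCell_ext F G ?_ ?_
    · exact eq_of_heq
        (((DA.cid_chcomp _).symm.trans (plaxcomp_nat α β)).trans (DA.chcomp_cid _))
    · exact eq_of_heq
        (((DB.cid_chcomp _).symm.trans (qlaxcomp_nat α β)).trans (DB.chcomp_cid _))
  subst hPCvc
  have hPVas : @PVas = @pbVassoc _ _ _ F G hF hG := by
    funext X Y Z W u v w
    refine pbCell_ext F G ?_ ?_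
    · exact eq_of_heq ((((DA.collapseL _ _ rfl rfl HEq.rfl HEq.rfl HEq.rfl
        (heq_of_eq (DA.cid_vcomp _ _))).trans
          (DA.collapseL _ _ rfl rfl HEq.rfl HEq.rfl HEq.rfl HEq.rfl)).symm.trans
        (plax_assoc u v w).symm).trans
        (DA.collapseR _ _ rfl rfl (heq_of_eq (DA.hid_comp _)) HEq.rfl
          (heq_of_eq (DA.hid_comp _))
          ((DA.chcompCongr rfl rfl rfl rfl rfl rfl HEq.rfl HEq.rfl HEq.rfl HEq.rfl
            HEq.rfl HEq.rfl HEq.rfl (heq_of_eq (DA.cid_vcomp _ _)) HEq.rfl).trans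
            (DA.cid_chcomp _))))
    · exact eq_of_heq ((((DB.collapseL _ _ rfl rfl HEq.rfl HEq.rfl HEq.rfl
        (heq_of_eq (DB.cid_vcomp _ _))).trans
          (DB.collapseL _ _ rfl rfl HEq.rfl HEq.rfl HEq.rfl HEq.rfl)).symm.trans
        (qlax_assoc u v w).symm).trans
        (DB.collapseR _ _ rfl rfl (heq_of_eq (DB.hid_comp _)) HEq.rfl
          (heq_of_eq (DB.hid_comp _))
          ((DB.chcompCongr rfl rfl rfl rfl rfl rfl HEq.rfl HEq.rfl HEq.rfl HEq.rfl
            HEq.rfl HEq.rfl HEq.rfl (heq_of_eq (DB.cid_vcomp _ _)) HEq.rfl).trans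
            (DB.cid_chcomp _))))
  subst hPVas
  have hPLun : @PLun = @pbLunit _ _ _ F G hF hG := by
    funext X Y u
    refine pbCell_ext F G ?_ ?_
    · exact eq_of_heq (((DA.collapseL _ _ rfl rfl HEq.rfl HEq.rfl HEq.rfl
        (heq_of_eq (DA.cid_vcomp _ _))).trans
          (DA.collapseL _ _ rfl rfl HEq.rfl HEq.rfl HEq.rfl HEq.rfl)).symm.trans
        (plax_lunit u))
    · exact eq_of_heq (((DB.collapseL _ _ rfl rfl HEq.rfl HEq.rfl HEq.rfl
        (heq_of_eq (DB.cid_vcomp _ _))).trans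
          (DB.collapseL _ _ rfl rfl HEq.rfl HEq.rfl HEq.rfl HEq.rfl)).symm.trans
        (qlax_lunit u))
  subst hPLun
  have hPRun : @PRun = @pbRunit _ _ _ F G hF hG := by
    funext X Y u
    refine pbCell_ext F G ?_ ?_
    · exact eq_of_heq (((DA.collapseL _ _ rfl rfl HEq.rfl HEq.rfl HEq.rfl
        (heq_of_eq (DA.cid_vcomp _ _))).trans
          (DA.collapseL _ _ rfl rfl HEq.rfl HEq.rfl HEq.rfl HEq.rfl)).symm.trans
        (plax_runit u))
    · exact eq_of_heq (((DB.collapseL _ _ rfl rfl HEq.rfl HEq.rfl HEq.rfl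
        (heq_of_eq (DB.cid_vcomp _ _))).trans
          (DB.collapseL _ _ rfl rfl HEq.rfl HEq.rfl HEq.rfl HEq.rfl)).symm.trans
        (qlax_runit u))
  subst hPRun
  have hPVasI : @PVasI = @pbVassocInv _ _ _ F G hF hG := by
    funext X Y Z W u v w
    have h1 := pbCell_heq_comps F G rfl rfl rfl rfl
      (heq_of_eq (pbHid_comp F G (pbHid F G X))) HEq.rfl HEq.rfl
      (heq_of_eq (pbHid_comp F G (pbHid F G W))) (Pvv2 u v w)
    refine pbCell_ext F G ?_ ?_
    · exact DA.inv_unique (DA.vassoc u.val.1 v.val.1 w.val.1) _ _ h1.1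
        (DA.vassoc_vassocInv _ _ _)
    · exact DB.inv_unique (DB.vassoc u.val.2 v.val.2 w.val.2) _ _ h1.2
        (DB.vassoc_vassocInv _ _ _)
  subst hPVasI
  have hPLunI : @PLunI = @pbLunitInv _ _ _ F G hF hG := by
    funext X Y u
    have h1 := pbCell_heq_comps F G rfl rfl rfl rfl
      (heq_of_eq (pbHid_comp F G (pbHid F G X))) HEq.rfl HEq.rfl
      (heq_of_eq (pbHid_comp F G (pbHid F G Y))) (Pll2 u)
    refine pbCell_ext F G ?_ ?_
    · exact DA.inv_unique (DA.lunit u.val.1) _ _ h1.1 (DA.lunit_lunitInv _)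
    · exact DB.inv_unique (DB.lunit u.val.2) _ _ h1.2 (DB.lunit_lunitInv _)
  subst hPLunI
  have hPRunI : @PRunI = @pbRunitInv _ _ _ F G hF hG := by
    funext X Y u
    have h1 := pbCell_heq_comps F G rfl rfl rfl rfl
      (heq_of_eq (pbHid_comp F G (pbHid F G X))) HEq.rfl HEq.rfl
      (heq_of_eq (pbHid_comp F G (pbHid F G Y))) (Prr2 u)
    refine pbCell_ext F G ?_ ?_
    · exact DA.inv_unique (DA.runit u.val.1) _ _ h1.1 (DA.runit_runitInv _)
    · exact DB.inv_unique (DB.runit u.val.2) _ _ h1.2 (DB.runit_runitInv _)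
  subst hPRunI
  exact ⟨rfl, HEq.rfl, HEq.rfl⟩


/-! ### Transfer lemmas along strict cells and composite specifications -/

section Transfer

variable {XA XB XC XD : WeakDoubleCat.{u}}
  {F : LaxDblFunctor XA XB} {G : LaxDblFunctor XC XD}
  {U : ColaxDblFunctor XA XC} {V : ColaxDblFunctor XB XD}

/-- Along a strict cell, `G` maps the colax unit comparison of `U` to that of
`V`. -/
theorem strict_cell_colaxid (σ : DblCellGP F G U V) (hσ : σ.IsStrict) (A : XA.Obj) :
    HEq (G.cmap (U.colaxid A)) (V.colaxid (F.obj A)) := by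
  obtain ⟨hF, hG, hobj, hhm, hvm, hcm, happ, hcell⟩ := hσ
  have h := σ.unit_compat A
  have hL1 : HEq
      (XD.chcomp (V.cmap (F.laxid A))
        (XD.chcomp (σ.cellapp (XA.vid A)) (G.cmap (U.colaxid A))))
      (XD.chcomp (σ.cellapp (XA.vid A)) (G.cmap (U.colaxid A))) :=
    XD.collapseL _ _ rfl rfl (heq_of_eq (V.hmap_id _))
      (V.vmapCongr rfl rfl (heq_of_eq (hF.1 A)).symm)
      (heq_of_eq (V.hmap_id _))
      (((V.cmapCongr rfl rfl rfl rfl HEq.rfl HEq.rfl (heq_of_eq (hF.1 A)) HEq.rfl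
          (hF.2.2.1 A)).trans (V.cmap_cid _)).trans
        (XD.cidCongr rfl rfl (V.vmapCongr rfl rfl (heq_of_eq (hF.1 A)).symm)))
  have hL2 : HEq (XD.chcomp (σ.cellapp (XA.vid A)) (G.cmap (U.colaxid A)))
      (G.cmap (U.colaxid A)) :=
    XD.collapseL _ _ (hobj A) (hobj A)
      ((happ A).trans (XD.hidCongr (hobj A))) (hvm (XA.vid A))
      ((happ A).trans (XD.hidCongr (hobj A)))
      ((hcell (XA.vid A)).trans (XD.cidCongr (hobj A) (hobj A) (hvm (XA.vid A))))
  have hid1 : HEq (XD.idcell (σ.app A)) (XD.cid (XD.vid (V.obj (F.obj A)))) :=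
    (XD.idcellCongr rfl (hobj A).symm (happ A)).trans (heq_of_eq (XD.idcell_hid _))
  have hid2 : HEq (G.laxid (U.obj A)) (XD.cid (XD.vid (V.obj (F.obj A)))) :=
    (hG.2.2.1 (U.obj A)).trans
      (XD.cidCongr (hobj A).symm (hobj A).symm (XD.vidCongr (hobj A).symm))
  have hinner : HEq (XD.chcomp (XD.idcell (σ.app A)) (G.laxid (U.obj A)))
      (XD.cid (XD.vid (V.obj (F.obj A)))) :=
    (XD.chcompCongr rfl (hobj A).symm (hobj A).symm rfl (hobj A).symm (hobj A).symm
      (happ A) (XD.hidCongr (hobj A).symm) HEq.rfl (XD.vidCongr (hobj A).symm)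
      ((heq_of_eq (hG.1 (U.obj A))).trans (XD.vidCongr (hobj A).symm))
      (happ A) (XD.hidCongr (hobj A).symm) hid1 hid2).trans
      (XD.cid_chcomp (XD.cid (XD.vid (V.obj (F.obj A)))))
  have hR : HEq
      (XD.chcomp (V.colaxid (F.obj A))
        (XD.chcomp (XD.idcell (σ.app A)) (G.laxid (U.obj A))))
      (V.colaxid (F.obj A)) :=
    XD.collapseR _ _ (hobj A).symm (hobj A).symm
      (((XD.hcompCongr rfl (hobj A).symm (hobj A).symm (happ A)
          (XD.hidCongr (hobj A).symm)).trans (heq_of_eq (XD.hid_comp _))))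
      ((heq_of_eq (hG.1 (U.obj A))).trans (XD.vidCongr (hobj A).symm))
      (((XD.hcompCongr rfl (hobj A).symm (hobj A).symm (happ A)
          (XD.hidCongr (hobj A).symm)).trans (heq_of_eq (XD.hid_comp _))))
      hinner
  exact (((hL1.trans hL2).symm.trans h).trans hR)

/-- Along a strict cell, `G` maps the colax composition comparison of `U` to
that of `V`. -/
theorem strict_cell_colaxcomp (σ : DblCellGP F G U V) (hσ : σ.IsStrict)
    {A B C : XA.Obj} (u : XA.Ver A B) (v : XA.Ver B C) :
    HEq (G.cmap (U.colaxcomp u v)) (V.colaxcomp (F.vmap u) (F.vmap v)) := by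
  obtain ⟨hF, hG, hobj, hhm, hvm, hcm, happ, hcell⟩ := hσ
  have h := σ.comp_compat u v
  have hL1 : HEq
      (XD.chcomp (V.cmap (F.laxcomp u v))
        (XD.chcomp (σ.cellapp (XA.vcomp u v)) (G.cmap (U.colaxcomp u v))))
      (XD.chcomp (σ.cellapp (XA.vcomp u v)) (G.cmap (U.colaxcomp u v))) :=
    XD.collapseL _ _ rfl rfl (heq_of_eq (V.hmap_id _))
      (V.vmapCongr rfl rfl (heq_of_eq (hF.2.1 u v)).symm)
      (heq_of_eq (V.hmap_id _))
      (((V.cmapCongr rfl rfl rfl rfl HEq.rfl (heq_of_eq (hF.2.1 u v)).symm HEq.rfl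
          HEq.rfl (F.strict_laxcomp hF u v)).trans (V.cmap_cid _)).trans
        (XD.cidCongr rfl rfl HEq.rfl))
  have hL2 : HEq
      (XD.chcomp (σ.cellapp (XA.vcomp u v)) (G.cmap (U.colaxcomp u v)))
      (G.cmap (U.colaxcomp u v)) :=
    XD.collapseL _ _ (hobj A) (hobj C)
      ((happ A).trans (XD.hidCongr (hobj A))) (hvm (XA.vcomp u v))
      ((happ C).trans (XD.hidCongr (hobj C)))
      ((hcell (XA.vcomp u v)).trans
        (XD.cidCongr (hobj A) (hobj C) (hvm (XA.vcomp u v))))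
  set z := XD.vcomp (V.vmap (F.vmap u)) (V.vmap (F.vmap v)) with hzdef
  have hfac1 : HEq (XD.cvcomp (σ.cellapp u) (σ.cellapp v)) (XD.cid z) :=
    (XD.cvcompCongr rfl (hobj A).symm rfl (hobj B).symm rfl (hobj C).symm
      (happ A) HEq.rfl (hvm u).symm (happ B) HEq.rfl (hvm v).symm (happ C)
      (hcell u) (hcell v)).trans (heq_of_eq (XD.cid_vcomp _ _))
  have hfac2 : HEq (G.laxcomp (U.vmap u) (U.vmap v)) (XD.cid z) :=
    (hG.2.2.2 (U.vmap u) (U.vmap v)).trans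
      (XD.cidCongr (hobj A).symm (hobj C).symm
        (XD.vcompCongr (hobj A).symm (hobj B).symm (hobj C).symm
          (hvm u).symm (hvm v).symm))
  have hw : HEq (G.vmap (XC.vcomp (U.vmap u) (U.vmap v))) z :=
    (heq_of_eq (hG.2.1 (U.vmap u) (U.vmap v))).trans
      (XD.vcompCongr (hobj A).symm (hobj B).symm (hobj C).symm
        (hvm u).symm (hvm v).symm)
  have hinner : HEq
      (XD.chcomp (XD.cvcomp (σ.cellapp u) (σ.cellapp v))
        (G.laxcomp (U.vmap u) (U.vmap v)))
      (XD.cid z) :=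
    (XD.chcompCongr rfl (hobj A).symm (hobj A).symm rfl (hobj C).symm (hobj C).symm
      (happ A) (XD.hidCongr (hobj A).symm) HEq.rfl
      (XD.vcompCongr (hobj A).symm (hobj B).symm (hobj C).symm
        (hvm u).symm (hvm v).symm) hw
      (happ C) (XD.hidCongr (hobj C).symm) hfac1 hfac2).trans
      (XD.cid_chcomp (XD.cid z))
  have hR : HEq
      (XD.chcomp (V.colaxcomp (F.vmap u) (F.vmap v))
        (XD.chcomp (XD.cvcomp (σ.cellapp u) (σ.cellapp v))
          (G.laxcomp (U.vmap u) (U.vmap v))))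
      (V.colaxcomp (F.vmap u) (F.vmap v)) :=
    XD.collapseR _ _ (hobj A).symm (hobj C).symm
      ((XD.hcompCongr rfl (hobj A).symm (hobj A).symm (happ A)
        (XD.hidCongr (hobj A).symm)).trans (heq_of_eq (XD.hid_comp _)))
      hw
      ((XD.hcompCongr rfl (hobj C).symm (hobj C).symm (happ C)
        (XD.hidCongr (hobj C).symm)).trans (heq_of_eq (XD.hid_comp _)))
      hinner
  exact (((hL1.trans hL2).symm.trans h).trans hR)

end Transfer

section CompSpec

variable {XE XA XB : WeakDoubleCat.{u}}

/-- In a composite specification with strict second factor, the image of the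
unit comparison of the first factor is the unit comparison of the composite. -/
theorem laxCompSpec_cmap_laxid {R₁ : LaxDblFunctor XE XA} {F : LaxDblFunctor XA XB}
    {R : LaxDblFunctor XE XB} (h₁ : LaxCompSpec R₁ F R) (hF : F.IsStrict)
    (A : XE.Obj) : HEq (F.cmap (R₁.laxid A)) (R.laxid A) :=
  ((h₁.2.2.2.2.1 A).trans
    (XB.collapseL _ _ rfl rfl HEq.rfl (heq_of_eq (hF.1 (R₁.obj A))).symm HEq.rfl
      (F.strict_laxid hF (R₁.obj A)))).symm

theorem laxCompSpec_cmap_laxcomp {R₁ : LaxDblFunctor XE XA} {F : LaxDblFunctor XA XB}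
    {R : LaxDblFunctor XE XB} (h₁ : LaxCompSpec R₁ F R) (hF : F.IsStrict)
    {A B C : XE.Obj} (u : XE.Ver A B) (v : XE.Ver B C) :
    HEq (F.cmap (R₁.laxcomp u v)) (R.laxcomp u v) :=
  ((h₁.2.2.2.2.2 u v).trans
    (XB.collapseL _ _ rfl rfl HEq.rfl
      (heq_of_eq (hF.2.1 (R₁.vmap u) (R₁.vmap v))).symm HEq.rfl
      (F.strict_laxcomp hF (R₁.vmap u) (R₁.vmap v)))).symm

end CompSpec

section HCompTransfer

variable {XA XB XC XD XB' XD' : WeakDoubleCat.{u}}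
  {F : LaxDblFunctor XA XB} {G : LaxDblFunctor XC XD}
  {U : ColaxDblFunctor XA XC} {V : ColaxDblFunctor XB XD}
  {F' : LaxDblFunctor XB XB'} {G' : LaxDblFunctor XD XD'}
  {W : ColaxDblFunctor XB' XD'}
  {F₂ : LaxDblFunctor XA XB'} {G₂ : LaxDblFunctor XC XD'}

/-- If a cell is a horizontal composite with a strict cell, its components are
the `G'`-images of the components of the first factor. -/
theorem hcomp_strict_app {π : DblCellGP F G U V} {π' : DblCellGP F' G' V W}
    {h1 : LaxCompSpec F F' F₂} {h2 : LaxCompSpec G G' G₂}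
    {ρ : DblCellGP F₂ G₂ U W} (hspec : HCompCellSpec π π' h1 h2 ρ)
    (hπ' : π'.IsStrict) (A : XA.Obj) :
    HEq (ρ.app A) (G'.hmap (π.app A)) := by
  obtain ⟨hF', hG', hobj', hhm', hvm', hcm', happ', hcell'⟩ := hπ'
  exact (hspec.1 A).trans
    ((XD'.hcompCongr (hobj' (F.obj A)) rfl rfl
      ((happ' (F.obj A)).trans (XD'.hidCongr (hobj' (F.obj A)))) HEq.rfl).trans
      (heq_of_eq (XD'.hid_comp _)))

theorem hcomp_strict_cellapp {π : DblCellGP F G U V} {π' : DblCellGP F' G' V W}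
    {h1 : LaxCompSpec F F' F₂} {h2 : LaxCompSpec G G' G₂}
    {ρ : DblCellGP F₂ G₂ U W} (hspec : HCompCellSpec π π' h1 h2 ρ)
    (hπ' : π'.IsStrict) {A B : XA.Obj} (u : XA.Ver A B) :
    HEq (ρ.cellapp u) (G'.cmap (π.cellapp u)) := by
  obtain ⟨hF', hG', hobj', hhm', hvm', hcm', happ', hcell'⟩ := hπ'
  exact (hspec.2 u).trans
    (XD'.collapseL _ _ (hobj' (F.obj A)) (hobj' (F.obj B))
      ((happ' (F.obj A)).trans (XD'.hidCongr (hobj' (F.obj A))))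
      (hvm' (F.vmap u))
      ((happ' (F.obj B)).trans (XD'.hidCongr (hobj' (F.obj B))))
      ((hcell' (F.vmap u)).trans
        (XD'.cidCongr (hobj' (F.obj A)) (hobj' (F.obj B)) (hvm' (F.vmap u)))))

end HCompTransfer


/-! ### The induced colax functor between pullbacks and its projection cells -/

section Induced

variable {XA XB XC XD XA' XC' : WeakDoubleCat.{u}}
  {F : LaxDblFunctor XA XB} {G : LaxDblFunctor XC XD}
  {U : ColaxDblFunctor XA XC} {V : ColaxDblFunctor XB XD}
  {F' : LaxDblFunctor XA' XB} {G' : LaxDblFunctor XC' XD}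
  {U' : ColaxDblFunctor XA' XC'}
  (σ : DblCellGP F G U V) (σ' : DblCellGP F' G' U' V)
  (hσ : σ.IsStrict) (hσ' : σ'.IsStrict)

/-- The induced colax functor `U ×_V U'` between the canonical pullbacks. -/
def myT : ColaxDblFunctor (pbCat F F' hσ.1 hσ'.1) (pbCat G G' hσ.2.1 hσ'.2.1) where
  obj X := ⟨(U.obj X.val.1, U'.obj X.val.2),
    (hσ.2.2.1 X.val.1).symm.trans
      ((congrArg V.obj X.prop).trans (hσ'.2.2.1 X.val.2))⟩
  hmap {X Y} f := ⟨(U.hmap f.val.1, U'.hmap f.val.2),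
    (hσ.2.2.2.1 f.val.1).symm.trans
      ((V.hmapCongr X.prop Y.prop f.prop).trans (hσ'.2.2.2.1 f.val.2))⟩
  vmap {X Y} u := ⟨(U.vmap u.val.1, U'.vmap u.val.2),
    (hσ.2.2.2.2.1 u.val.1).symm.trans
      ((V.vmapCongr X.prop Y.prop u.prop).trans (hσ'.2.2.2.2.1 u.val.2))⟩
  cmap {X Y X₂ Y₂ f u v g} α := ⟨(U.cmap α.val.1, U'.cmap α.val.2),
    (hσ.2.2.2.2.2.1 α.val.1).symm.trans
      ((V.cmapCongr X.prop Y.prop X₂.prop Y₂.prop f.prop u.prop v.prop g.prop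
        α.prop).trans (hσ'.2.2.2.2.2.1 α.val.2))⟩
  hmap_id X := pbHor_ext G G' (U.hmap_id _) (U'.hmap_id _)
  hmap_comp f g := pbHor_ext G G' (U.hmap_comp _ _) (U'.hmap_comp _ _)
  cmap_cid u := pbCell_heq G G' rfl rfl rfl rfl
    (heq_of_eq (pbHor_ext G G' (U.hmap_id _) (U'.hmap_id _))) HEq.rfl HEq.rfl
    (heq_of_eq (pbHor_ext G G' (U.hmap_id _) (U'.hmap_id _)))
    (U.cmap_cid _) (U'.cmap_cid _)
  cmap_chcomp α β := pbCell_heq G G' rfl rfl rfl rfl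
    (heq_of_eq (pbHor_ext G G' (U.hmap_comp _ _) (U'.hmap_comp _ _))) HEq.rfl HEq.rfl
    (heq_of_eq (pbHor_ext G G' (U.hmap_comp _ _) (U'.hmap_comp _ _)))
    (U.cmap_chcomp _ _) (U'.cmap_chcomp _ _)
  colaxid A := ⟨(U.colaxid A.val.1, U'.colaxid A.val.2),
    (strict_cell_colaxid σ hσ A.val.1).trans
      ((V.colaxidCongr A.prop).trans (strict_cell_colaxid σ' hσ' A.val.2).symm)⟩
  colaxcomp {X Y Z} u v := ⟨(U.colaxcomp u.val.1 v.val.1, U'.colaxcomp u.val.2 v.val.2),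
    (strict_cell_colaxcomp σ hσ u.val.1 v.val.1).trans
      ((V.colaxcompCongr X.prop Y.prop Z.prop u.prop v.prop).trans
        (strict_cell_colaxcomp σ' hσ' u.val.2 v.val.2).symm)⟩
  colaxid_nat f := pbCell_heq G G' rfl rfl rfl rfl
    (heq_of_eq ((pbHcomp_id G G' _).trans (pbHid_comp G G' _).symm)) HEq.rfl HEq.rfl
    (heq_of_eq ((pbHcomp_id G G' _).trans (pbHid_comp G G' _).symm))
    (U.colaxid_nat _) (U'.colaxid_nat _)
  colaxcomp_nat α β := pbCell_heq G G' rfl rfl rfl rfl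
    (heq_of_eq ((pbHcomp_id G G' _).trans (pbHid_comp G G' _).symm)) HEq.rfl HEq.rfl
    (heq_of_eq ((pbHcomp_id G G' _).trans (pbHid_comp G G' _).symm))
    (U.colaxcomp_nat _ _) (U'.colaxcomp_nat _ _)
  colax_lunit u := pbCell_heq G G' rfl rfl rfl rfl
    (heq_of_eq (((pbHid_comp G G' _).trans (pbHid_comp G G' _)).trans
      (pbHor_ext G G' (U.hmap_id _) (U'.hmap_id _)).symm)) HEq.rfl HEq.rfl
    (heq_of_eq (((pbHid_comp G G' _).trans (pbHid_comp G G' _)).trans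
      (pbHor_ext G G' (U.hmap_id _) (U'.hmap_id _)).symm))
    (U.colax_lunit _) (U'.colax_lunit _)
  colax_runit u := pbCell_heq G G' rfl rfl rfl rfl
    (heq_of_eq (((pbHid_comp G G' _).trans (pbHid_comp G G' _)).trans
      (pbHor_ext G G' (U.hmap_id _) (U'.hmap_id _)).symm)) HEq.rfl HEq.rfl
    (heq_of_eq (((pbHid_comp G G' _).trans (pbHid_comp G G' _)).trans
      (pbHor_ext G G' (U.hmap_id _) (U'.hmap_id _)).symm))
    (U.colax_runit _) (U'.colax_runit _)
  colax_assoc u v w := pbCell_heq G G' rfl rfl rfl rfl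
    (heq_of_eq (((congrArg
        (fun z => pbHcomp G G' z (pbHcomp G G' (pbHid G G' _) (pbHid G G' _)))
        (pbHor_ext G G' (U.hmap_id _) (U'.hmap_id _))).trans
      ((pbHid_comp G G' _).trans (pbHid_comp G G' _))).trans
      ((pbHid_comp G G' _).trans (pbHid_comp G G' _)).symm)) HEq.rfl HEq.rfl
    (heq_of_eq (((congrArg
        (fun z => pbHcomp G G' z (pbHcomp G G' (pbHid G G' _) (pbHid G G' _)))
        (pbHor_ext G G' (U.hmap_id _) (U'.hmap_id _))).trans
      ((pbHid_comp G G' _).trans (pbHid_comp G G' _))).trans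
      ((pbHid_comp G G' _).trans (pbHid_comp G G' _)).symm))
    (U.colax_assoc _ _ _) (U'.colax_assoc _ _ _)

/-- The first projection cell `π₁`. -/
def myPi1 : DblCellGP (pbPr1 F F' hσ.1 hσ'.1) (pbPr1 G G' hσ.2.1 hσ'.2.1)
    (myT σ σ' hσ hσ') U where
  app A := XC.hid (U.obj A.val.1)
  cellapp u := XC.cid (U.vmap u.val.1)
  hnat f := (XC.hcomp_id _).trans (XC.hid_comp _).symm
  cellnat α := (XC.chcomp_cid _).trans (XC.cid_chcomp _).symm
  unit_compat A := by
    refine HEq.trans (HEq.trans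
      (XC.collapseL _ _ rfl rfl (heq_of_eq (U.hmap_id _)) HEq.rfl
        (heq_of_eq (U.hmap_id _)) (U.cmap_cid _))
      (XC.collapseL _ _ rfl rfl HEq.rfl HEq.rfl HEq.rfl HEq.rfl)) (HEq.symm ?_)
    exact XC.collapseR _ _ rfl rfl (heq_of_eq (XC.hid_comp _)) HEq.rfl
      (heq_of_eq (XC.hid_comp _))
      ((XC.chcompCongr rfl rfl rfl rfl rfl rfl HEq.rfl HEq.rfl HEq.rfl HEq.rfl
        HEq.rfl HEq.rfl HEq.rfl (heq_of_eq (XC.idcell_hid _)) HEq.rfl).trans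
        (XC.cid_chcomp _))
  comp_compat u v := by
    refine HEq.trans (HEq.trans
      (XC.collapseL _ _ rfl rfl (heq_of_eq (U.hmap_id _)) HEq.rfl
        (heq_of_eq (U.hmap_id _)) (U.cmap_cid _))
      (XC.collapseL _ _ rfl rfl HEq.rfl HEq.rfl HEq.rfl HEq.rfl)) (HEq.symm ?_)
    exact XC.collapseR _ _ rfl rfl (heq_of_eq (XC.hid_comp _)) HEq.rfl
      (heq_of_eq (XC.hid_comp _))
      ((XC.chcompCongr rfl rfl rfl rfl rfl rfl HEq.rfl HEq.rfl HEq.rfl HEq.rfl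
        HEq.rfl HEq.rfl HEq.rfl (heq_of_eq (XC.cid_vcomp _ _)) HEq.rfl).trans
        (XC.cid_chcomp _))

/-- The second projection cell `π₂`. -/
def myPi2 : DblCellGP (pbPr2 F F' hσ.1 hσ'.1) (pbPr2 G G' hσ.2.1 hσ'.2.1)
    (myT σ σ' hσ hσ') U' where
  app A := XC'.hid (U'.obj A.val.2)
  cellapp u := XC'.cid (U'.vmap u.val.2)
  hnat f := (XC'.hcomp_id _).trans (XC'.hid_comp _).symm
  cellnat α := (XC'.chcomp_cid _).trans (XC'.cid_chcomp _).symm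
  unit_compat A := by
    refine HEq.trans (HEq.trans
      (XC'.collapseL _ _ rfl rfl (heq_of_eq (U'.hmap_id _)) HEq.rfl
        (heq_of_eq (U'.hmap_id _)) (U'.cmap_cid _))
      (XC'.collapseL _ _ rfl rfl HEq.rfl HEq.rfl HEq.rfl HEq.rfl)) (HEq.symm ?_)
    exact XC'.collapseR _ _ rfl rfl (heq_of_eq (XC'.hid_comp _)) HEq.rfl
      (heq_of_eq (XC'.hid_comp _))
      ((XC'.chcompCongr rfl rfl rfl rfl rfl rfl HEq.rfl HEq.rfl HEq.rfl HEq.rfl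
        HEq.rfl HEq.rfl HEq.rfl (heq_of_eq (XC'.idcell_hid _)) HEq.rfl).trans
        (XC'.cid_chcomp _))
  comp_compat u v := by
    refine HEq.trans (HEq.trans
      (XC'.collapseL _ _ rfl rfl (heq_of_eq (U'.hmap_id _)) HEq.rfl
        (heq_of_eq (U'.hmap_id _)) (U'.cmap_cid _))
      (XC'.collapseL _ _ rfl rfl HEq.rfl HEq.rfl HEq.rfl HEq.rfl)) (HEq.symm ?_)
    exact XC'.collapseR _ _ rfl rfl (heq_of_eq (XC'.hid_comp _)) HEq.rfl
      (heq_of_eq (XC'.hid_comp _))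
      ((XC'.chcompCongr rfl rfl rfl rfl rfl rfl HEq.rfl HEq.rfl HEq.rfl HEq.rfl
        HEq.rfl HEq.rfl HEq.rfl (heq_of_eq (XC'.cid_vcomp _ _)) HEq.rfl).trans
        (XC'.cid_chcomp _))

theorem myPi1_strict : (myPi1 σ σ' hσ hσ').IsStrict :=
  ⟨pbPr1_strict _ _ _ _, pbPr1_strict _ _ _ _, fun _ => rfl, fun _ => HEq.rfl,
    fun _ => HEq.rfl, fun _ => HEq.rfl, fun _ => HEq.rfl, fun _ => HEq.rfl⟩

theorem myPi2_strict : (myPi2 σ σ' hσ hσ').IsStrict :=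
  ⟨pbPr2_strict _ _ _ _, pbPr2_strict _ _ _ _, fun _ => rfl, fun _ => HEq.rfl,
    fun _ => HEq.rfl, fun _ => HEq.rfl, fun _ => HEq.rfl, fun _ => HEq.rfl⟩

end Induced


theorem pbHcomp_congr2 {DA DB DC : WeakDoubleCat.{u}} (F : LaxDblFunctor DA DC)
    (G : LaxDblFunctor DB DC) {X Y Z : (pbData F G).Obj}
    {f f' : (pbData F G).Hor X Y} {g g' : (pbData F G).Hor Y Z}
    (h1 : f = f') (h2 : g = g') : pbHcomp F G f g = pbHcomp F G f' g' := by
  rw [h1, h2]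

section Cone

variable {XA XB XC XD XA' XC' : WeakDoubleCat.{u}}
  {F : LaxDblFunctor XA XB} {G : LaxDblFunctor XC XD}
  {U : ColaxDblFunctor XA XC} {V : ColaxDblFunctor XB XD}
  {F' : LaxDblFunctor XA' XB} {G' : LaxDblFunctor XC' XD}
  {U' : ColaxDblFunctor XA' XC'}
  (σ : DblCellGP F G U V) (σ' : DblCellGP F' G' U' V)
  (hσ : σ.IsStrict) (hσ' : σ'.IsStrict)
  {XE XF : WeakDoubleCat.{u}} (Tw : ColaxDblFunctor XE XF)
  (R₁ : LaxDblFunctor XE XA) (S₁ : LaxDblFunctor XF XC)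
  (ρ₁ : DblCellGP R₁ S₁ Tw U)
  (R₂ : LaxDblFunctor XE XA') (S₂ : LaxDblFunctor XF XC')
  (ρ₂ : DblCellGP R₂ S₂ Tw U')
  (R : LaxDblFunctor XE XB) (S : LaxDblFunctor XF XD)
  (h₁ : LaxCompSpec R₁ F R) (h₂ : LaxCompSpec R₂ F' R)
  (k₁ : LaxCompSpec S₁ G S) (k₂ : LaxCompSpec S₂ G' S)
  (c₁ : DblCellGP R S Tw V)
  (hs1 : HCompCellSpec ρ₁ σ h₁ k₁ c₁) (hs2 : HCompCellSpec ρ₂ σ' h₂ k₂ c₁)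

/-- The comparison functor into the pullback over `XE`. -/
def coneR0 : LaxDblFunctor XE (pbCat F F' hσ.1 hσ'.1) where
  obj e := ⟨(R₁.obj e, R₂.obj e), (h₁.1 e).symm.trans (h₂.1 e)⟩
  hmap f := ⟨(R₁.hmap f, R₂.hmap f), (h₁.2.1 f).symm.trans (h₂.2.1 f)⟩
  vmap u := ⟨(R₁.vmap u, R₂.vmap u), (h₁.2.2.1 u).symm.trans (h₂.2.2.1 u)⟩
  cmap α := ⟨(R₁.cmap α, R₂.cmap α), (h₁.2.2.2.1 α).symm.trans (h₂.2.2.2.1 α)⟩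
  hmap_id A := pbHor_ext F F' (R₁.hmap_id A) (R₂.hmap_id A)
  hmap_comp f g := pbHor_ext F F' (R₁.hmap_comp f g) (R₂.hmap_comp f g)
  cmap_cid u := pbCell_heq F F' rfl rfl rfl rfl
    (heq_of_eq (pbHor_ext F F' (R₁.hmap_id _) (R₂.hmap_id _))) HEq.rfl HEq.rfl
    (heq_of_eq (pbHor_ext F F' (R₁.hmap_id _) (R₂.hmap_id _)))
    (R₁.cmap_cid u) (R₂.cmap_cid u)
  cmap_chcomp α β := pbCell_heq F F' rfl rfl rfl rfl
    (heq_of_eq (pbHor_ext F F' (R₁.hmap_comp _ _) (R₂.hmap_comp _ _))) HEq.rfl HEq.rfl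
    (heq_of_eq (pbHor_ext F F' (R₁.hmap_comp _ _) (R₂.hmap_comp _ _)))
    (R₁.cmap_chcomp α β) (R₂.cmap_chcomp α β)
  laxid A := ⟨(R₁.laxid A, R₂.laxid A),
    (laxCompSpec_cmap_laxid h₁ hσ.1 A).trans
      (laxCompSpec_cmap_laxid h₂ hσ'.1 A).symm⟩
  laxcomp u v := ⟨(R₁.laxcomp u v, R₂.laxcomp u v),
    (laxCompSpec_cmap_laxcomp h₁ hσ.1 u v).trans
      (laxCompSpec_cmap_laxcomp h₂ hσ'.1 u v).symm⟩
  laxid_nat f := pbCell_heq F F' rfl rfl rfl rfl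
    (heq_of_eq ((pbHid_comp F F' _).trans (pbHcomp_id F F' _).symm)) HEq.rfl HEq.rfl
    (heq_of_eq ((pbHid_comp F F' _).trans (pbHcomp_id F F' _).symm))
    (R₁.laxid_nat f) (R₂.laxid_nat f)
  laxcomp_nat α β := pbCell_heq F F' rfl rfl rfl rfl
    (heq_of_eq ((pbHid_comp F F' _).trans (pbHcomp_id F F' _).symm)) HEq.rfl HEq.rfl
    (heq_of_eq ((pbHid_comp F F' _).trans (pbHcomp_id F F' _).symm))
    (R₁.laxcomp_nat α β) (R₂.laxcomp_nat α β)
  lax_lunit u := pbCell_heq F F' rfl rfl rfl rfl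
    (heq_of_eq ((pbHid_comp F F' _).trans ((pbHid_comp F F' _).trans
      (pbHor_ext F F' (R₁.hmap_id _) (R₂.hmap_id _))))) HEq.rfl HEq.rfl
    (heq_of_eq ((pbHid_comp F F' _).trans ((pbHid_comp F F' _).trans
      (pbHor_ext F F' (R₁.hmap_id _) (R₂.hmap_id _)))))
    (R₁.lax_lunit u) (R₂.lax_lunit u)
  lax_runit u := pbCell_heq F F' rfl rfl rfl rfl
    (heq_of_eq ((pbHid_comp F F' _).trans ((pbHid_comp F F' _).trans
      (pbHor_ext F F' (R₁.hmap_id _) (R₂.hmap_id _))))) HEq.rfl HEq.rfl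
    (heq_of_eq ((pbHid_comp F F' _).trans ((pbHid_comp F F' _).trans
      (pbHor_ext F F' (R₁.hmap_id _) (R₂.hmap_id _)))))
    (R₁.lax_runit u) (R₂.lax_runit u)
  lax_assoc u v w := pbCell_heq F F' rfl rfl rfl rfl
    (heq_of_eq (((pbHid_comp F F' _).trans (pbHid_comp F F' _)).trans
      ((pbHid_comp F F' _).trans ((pbHid_comp F F' _).trans
        (pbHor_ext F F' (R₁.hmap_id _) (R₂.hmap_id _)))).symm)) HEq.rfl HEq.rfl
    (heq_of_eq (((pbHid_comp F F' _).trans (pbHid_comp F F' _)).trans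
      ((pbHid_comp F F' _).trans ((pbHid_comp F F' _).trans
        (pbHor_ext F F' (R₁.hmap_id _) (R₂.hmap_id _)))).symm))
    (R₁.lax_assoc u v w) (R₂.lax_assoc u v w)

/-- The comparison functor into the pullback over `XF`. -/
def coneS0 : LaxDblFunctor XF (pbCat G G' hσ.2.1 hσ'.2.1) where
  obj e := ⟨(S₁.obj e, S₂.obj e), (k₁.1 e).symm.trans (k₂.1 e)⟩
  hmap f := ⟨(S₁.hmap f, S₂.hmap f), (k₁.2.1 f).symm.trans (k₂.2.1 f)⟩
  vmap u := ⟨(S₁.vmap u, S₂.vmap u), (k₁.2.2.1 u).symm.trans (k₂.2.2.1 u)⟩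
  cmap α := ⟨(S₁.cmap α, S₂.cmap α), (k₁.2.2.2.1 α).symm.trans (k₂.2.2.2.1 α)⟩
  hmap_id A := pbHor_ext G G' (S₁.hmap_id A) (S₂.hmap_id A)
  hmap_comp f g := pbHor_ext G G' (S₁.hmap_comp f g) (S₂.hmap_comp f g)
  cmap_cid u := pbCell_heq G G' rfl rfl rfl rfl
    (heq_of_eq (pbHor_ext G G' (S₁.hmap_id _) (S₂.hmap_id _))) HEq.rfl HEq.rfl
    (heq_of_eq (pbHor_ext G G' (S₁.hmap_id _) (S₂.hmap_id _)))
    (S₁.cmap_cid u) (S₂.cmap_cid u)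
  cmap_chcomp α β := pbCell_heq G G' rfl rfl rfl rfl
    (heq_of_eq (pbHor_ext G G' (S₁.hmap_comp _ _) (S₂.hmap_comp _ _))) HEq.rfl HEq.rfl
    (heq_of_eq (pbHor_ext G G' (S₁.hmap_comp _ _) (S₂.hmap_comp _ _)))
    (S₁.cmap_chcomp α β) (S₂.cmap_chcomp α β)
  laxid A := ⟨(S₁.laxid A, S₂.laxid A),
    (laxCompSpec_cmap_laxid k₁ hσ.2.1 A).trans
      (laxCompSpec_cmap_laxid k₂ hσ'.2.1 A).symm⟩
  laxcomp u v := ⟨(S₁.laxcomp u v, S₂.laxcomp u v),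
    (laxCompSpec_cmap_laxcomp k₁ hσ.2.1 u v).trans
      (laxCompSpec_cmap_laxcomp k₂ hσ'.2.1 u v).symm⟩
  laxid_nat f := pbCell_heq G G' rfl rfl rfl rfl
    (heq_of_eq ((pbHid_comp G G' _).trans (pbHcomp_id G G' _).symm)) HEq.rfl HEq.rfl
    (heq_of_eq ((pbHid_comp G G' _).trans (pbHcomp_id G G' _).symm))
    (S₁.laxid_nat f) (S₂.laxid_nat f)
  laxcomp_nat α β := pbCell_heq G G' rfl rfl rfl rfl
    (heq_of_eq ((pbHid_comp G G' _).trans (pbHcomp_id G G' _).symm)) HEq.rfl HEq.rfl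
    (heq_of_eq ((pbHid_comp G G' _).trans (pbHcomp_id G G' _).symm))
    (S₁.laxcomp_nat α β) (S₂.laxcomp_nat α β)
  lax_lunit u := pbCell_heq G G' rfl rfl rfl rfl
    (heq_of_eq ((pbHid_comp G G' _).trans ((pbHid_comp G G' _).trans
      (pbHor_ext G G' (S₁.hmap_id _) (S₂.hmap_id _))))) HEq.rfl HEq.rfl
    (heq_of_eq ((pbHid_comp G G' _).trans ((pbHid_comp G G' _).trans
      (pbHor_ext G G' (S₁.hmap_id _) (S₂.hmap_id _)))))
    (S₁.lax_lunit u) (S₂.lax_lunit u)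
  lax_runit u := pbCell_heq G G' rfl rfl rfl rfl
    (heq_of_eq ((pbHid_comp G G' _).trans ((pbHid_comp G G' _).trans
      (pbHor_ext G G' (S₁.hmap_id _) (S₂.hmap_id _))))) HEq.rfl HEq.rfl
    (heq_of_eq ((pbHid_comp G G' _).trans ((pbHid_comp G G' _).trans
      (pbHor_ext G G' (S₁.hmap_id _) (S₂.hmap_id _)))))
    (S₁.lax_runit u) (S₂.lax_runit u)
  lax_assoc u v w := pbCell_heq G G' rfl rfl rfl rfl
    (heq_of_eq (((pbHid_comp G G' _).trans (pbHid_comp G G' _)).trans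
      ((pbHid_comp G G' _).trans ((pbHid_comp G G' _).trans
        (pbHor_ext G G' (S₁.hmap_id _) (S₂.hmap_id _)))).symm)) HEq.rfl HEq.rfl
    (heq_of_eq (((pbHid_comp G G' _).trans (pbHid_comp G G' _)).trans
      ((pbHid_comp G G' _).trans ((pbHid_comp G G' _).trans
        (pbHor_ext G G' (S₁.hmap_id _) (S₂.hmap_id _)))).symm))
    (S₁.lax_assoc u v w) (S₂.lax_assoc u v w)

/-- The comparison cell into the pullback square. -/
def coneCell : DblCellGP (coneR0 σ σ' hσ hσ' R₁ R₂ R h₁ h₂)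
    (coneS0 σ σ' hσ hσ' S₁ S₂ S k₁ k₂) Tw (myT σ σ' hσ hσ') where
  app A := ⟨(ρ₁.app A, ρ₂.app A),
    (hcomp_strict_app hs1 hσ A).symm.trans (hcomp_strict_app hs2 hσ' A)⟩
  cellapp u := ⟨(ρ₁.cellapp u, ρ₂.cellapp u),
    (hcomp_strict_cellapp hs1 hσ u).symm.trans (hcomp_strict_cellapp hs2 hσ' u)⟩
  hnat f := pbHor_ext G G' (ρ₁.hnat f) (ρ₂.hnat f)
  cellnat α := pbCell_heq G G' rfl rfl rfl rfl
    (heq_of_eq (pbHor_ext G G' (ρ₁.hnat _) (ρ₂.hnat _))) HEq.rfl HEq.rfl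
    (heq_of_eq (pbHor_ext G G' (ρ₁.hnat _) (ρ₂.hnat _)))
    (ρ₁.cellnat α) (ρ₂.cellnat α)
  unit_compat A := pbCell_heq G G' rfl rfl rfl rfl
    (heq_of_eq (pbHcomp_congr2 G G' (pbHor_ext G G' (U.hmap_id _) (U'.hmap_id _))
      (pbHcomp_congr2 G G' rfl (pbHor_ext G G' (S₁.hmap_id _) (S₂.hmap_id _)))))
    HEq.rfl HEq.rfl
    (heq_of_eq (pbHcomp_congr2 G G' (pbHor_ext G G' (U.hmap_id _) (U'.hmap_id _))
      (pbHcomp_congr2 G G' rfl (pbHor_ext G G' (S₁.hmap_id _) (S₂.hmap_id _)))))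
    (ρ₁.unit_compat A) (ρ₂.unit_compat A)
  comp_compat u v := pbCell_heq G G' rfl rfl rfl rfl
    (heq_of_eq (pbHcomp_congr2 G G' (pbHor_ext G G' (U.hmap_id _) (U'.hmap_id _))
      (pbHcomp_congr2 G G' rfl (pbHor_ext G G' (S₁.hmap_id _) (S₂.hmap_id _)))))
    HEq.rfl HEq.rfl
    (heq_of_eq (pbHcomp_congr2 G G' (pbHor_ext G G' (U.hmap_id _) (U'.hmap_id _))
      (pbHcomp_congr2 G G' rfl (pbHor_ext G G' (S₁.hmap_id _) (S₂.hmap_id _)))))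
    (ρ₁.comp_compat u v) (ρ₂.comp_compat u v)

end Cone

/-- Let `σ : VF ⇒ GU` and `σ' : VF' ⇒ G'U'` be strict
cells in `Dbl` with common right vertical arrow `V`.  Then there exist a
unique colax functor `U ×_V U'` between the set-theoretical pullbacks,
together with strict cells `π₁`, `π₂` over the pullback projections (given
set-theoretically by `(A, A') ↦ (U A, U' A')`), and the resulting square is a
pullback in the category `Dbl₁` of colax functors and arbitrary cells. -/
theorem pullback_of_strict_cells
    (XA XB XC XD XA' XC' : WeakDoubleCat.{u})
    (F : LaxDblFunctor XA XB) (G : LaxDblFunctor XC XD)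
    (U : ColaxDblFunctor XA XC) (V : ColaxDblFunctor XB XD)
    (F' : LaxDblFunctor XA' XB) (G' : LaxDblFunctor XC' XD)
    (U' : ColaxDblFunctor XA' XC')
    (σ : DblCellGP F G U V) (σ' : DblCellGP F' G' U' V)
    (hσ : σ.IsStrict) (hσ' : σ'.IsStrict)
    -- the set-theoretical pullbacks of `F, F'` and of `G, G'`
    (PA : WeakDoubleCat.{u}) (hPA : PA.toDblData = pbData F F')
    (prA1 : LaxDblFunctor PA XA) (prA2 : LaxDblFunctor PA XA')
    (hprA : IsSetPullback F F' PA hPA prA1 prA2)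
    (PC : WeakDoubleCat.{u}) (hPC : PC.toDblData = pbData G G')
    (prC1 : LaxDblFunctor PC XC) (prC2 : LaxDblFunctor PC XC')
    (hprC : IsSetPullback G G' PC hPC prC1 prC2) :
    ∃ (T : ColaxDblFunctor PA PC)
      (π₁ : DblCellGP prA1 prC1 T U) (π₂ : DblCellGP prA2 prC2 T U'),
      -- `T = U ×_V U'` is given set-theoretically by `(A, A') ↦ (U A, U' A')`
      (∀ x : PA.Obj,
        (cast (congrArg DblData.Obj hPC) (T.obj x)).val =
          (U.obj (cast (congrArg DblData.Obj hPA) x).val.1,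
           U'.obj (cast (congrArg DblData.Obj hPA) x).val.2)) ∧
      -- `π₁` and `π₂` are strict cells
      π₁.IsStrict ∧ π₂.IsStrict ∧
      -- uniqueness of `T` (together with such strict cells)
      (∀ (T' : ColaxDblFunctor PA PC),
        (∃ (ρ₁ : DblCellGP prA1 prC1 T' U) (ρ₂ : DblCellGP prA2 prC2 T' U'),
          ρ₁.IsStrict ∧ ρ₂.IsStrict) → T' = T) ∧
      -- the square is a pullback in `Dbl₁` (colax functors as objects,
      -- arbitrary cells of `Dbl` as morphisms, composed horizontally)
      (∀ (XE XF : WeakDoubleCat.{u}) (Tw : ColaxDblFunctor XE XF)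
        (R₁ : LaxDblFunctor XE XA) (S₁ : LaxDblFunctor XF XC)
        (ρ₁ : DblCellGP R₁ S₁ Tw U)
        (R₂ : LaxDblFunctor XE XA') (S₂ : LaxDblFunctor XF XC')
        (ρ₂ : DblCellGP R₂ S₂ Tw U'),
        (∃ (R : LaxDblFunctor XE XB) (S : LaxDblFunctor XF XD)
           (h₁ : LaxCompSpec R₁ F R) (h₂ : LaxCompSpec R₂ F' R)
           (k₁ : LaxCompSpec S₁ G S) (k₂ : LaxCompSpec S₂ G' S)
           (c₁ c₂ : DblCellGP R S Tw V),
           HCompCellSpec ρ₁ σ h₁ k₁ c₁ ∧ HCompCellSpec ρ₂ σ' h₂ k₂ c₂ ∧ c₁ = c₂) →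
        ∃! ξ : Σ' (R₀ : LaxDblFunctor XE PA) (S₀ : LaxDblFunctor XF PC),
            DblCellGP R₀ S₀ Tw T,
          (∃ (m₁ : LaxCompSpec ξ.1 prA1 R₁) (n₁ : LaxCompSpec ξ.2.1 prC1 S₁),
            HCompCellSpec ξ.2.2 π₁ m₁ n₁ ρ₁) ∧
          (∃ (m₂ : LaxCompSpec ξ.1 prA2 R₂) (n₂ : LaxCompSpec ξ.2.1 prC2 S₂),
            HCompCellSpec ξ.2.2 π₂ m₂ n₂ ρ₂)) := by
  obtain ⟨hPA', hp1, hp2⟩ := pullback_rigid hσ.1 hσ'.1 hprA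
  subst hPA'
  obtain rfl := eq_of_heq hp1
  obtain rfl := eq_of_heq hp2
  obtain ⟨hPC', hq1, hq2⟩ := pullback_rigid hσ.2.1 hσ'.2.1 hprC
  subst hPC'
  obtain rfl := eq_of_heq hq1
  obtain rfl := eq_of_heq hq2
  refine ⟨myT σ σ' hσ hσ', myPi1 σ σ' hσ hσ', myPi2 σ σ' hσ hσ',
    fun x => rfl, myPi1_strict σ σ' hσ hσ', myPi2_strict σ σ' hσ hσ', ?_, ?_⟩
  · -- uniqueness of `T`
    rintro T' ⟨ρ₁, ρ₂, hρ₁, hρ₂⟩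
    obtain ⟨tobj, thm, tvm, tcm, thi, thc, tccid, tcchc, tcid, tccomp,
      tn1, tn2, tl1, tl2, ta⟩ := T'
    have hto : tobj = (myT σ σ' hσ hσ').obj :=
      funext fun X => Subtype.ext
        (Prod.ext_iff.mpr ⟨(hρ₁.2.2.1 X).symm, (hρ₂.2.2.1 X).symm⟩)
    subst hto
    have hth : @thm = @ColaxDblFunctor.hmap _ _ (myT σ σ' hσ hσ') := by
      funext X Y f
      exact pbHor_ext G G' (eq_of_heq (hρ₁.2.2.2.1 f)).symm
        (eq_of_heq (hρ₂.2.2.2.1 f)).symm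
    subst hth
    have htv : @tvm = @ColaxDblFunctor.vmap _ _ (myT σ σ' hσ hσ') := by
      funext X Y u
      exact pbVer_ext G G' (eq_of_heq (hρ₁.2.2.2.2.1 u)).symm
        (eq_of_heq (hρ₂.2.2.2.2.1 u)).symm
    subst htv
    have htc : @tcm = @ColaxDblFunctor.cmap _ _ (myT σ σ' hσ hσ') := by
      funext X Y X2 Y2 f u v g α
      exact pbCell_ext G G' (eq_of_heq (hρ₁.2.2.2.2.2.1 α)).symm
        (eq_of_heq (hρ₂.2.2.2.2.2.1 α)).symm
    subst htc
    have hti : @tcid = @ColaxDblFunctor.colaxid _ _ (myT σ σ' hσ hσ') := by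
      funext A
      exact pbCell_ext G G' (eq_of_heq (strict_cell_colaxid ρ₁ hρ₁ A))
        (eq_of_heq (strict_cell_colaxid ρ₂ hρ₂ A))
    subst hti
    have htcc : @tccomp = @ColaxDblFunctor.colaxcomp _ _ (myT σ σ' hσ hσ') := by
      funext X Y Z u v
      exact pbCell_ext G G' (eq_of_heq (strict_cell_colaxcomp ρ₁ hρ₁ u v))
        (eq_of_heq (strict_cell_colaxcomp ρ₂ hρ₂ u v))
    subst htcc
    rfl
  · -- the universal property
    intro XE XF Tw R₁ S₁ ρ₁ R₂ S₂ ρ₂ hcone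
    obtain ⟨R, S, h₁, h₂, k₁, k₂, c₁, c₂, hs1, hs2, hcc⟩ := hcone
    subst hcc
    refine ⟨⟨coneR0 σ σ' hσ hσ' R₁ R₂ R h₁ h₂, coneS0 σ σ' hσ hσ' S₁ S₂ S k₁ k₂,
      coneCell σ σ' hσ hσ' Tw R₁ S₁ ρ₁ R₂ S₂ ρ₂ R S h₁ h₂ k₁ k₂ c₁ hs1 hs2⟩,
      ⟨⟨⟨fun A => rfl, fun f => HEq.rfl, fun u => HEq.rfl, fun α => HEq.rfl,
          fun A => (XA.cid_chcomp _).symm, fun u v => (XA.cid_chcomp _).symm⟩,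
        ⟨fun A => rfl, fun f => HEq.rfl, fun u => HEq.rfl, fun α => HEq.rfl,
          fun A => (XC.cid_chcomp _).symm, fun u v => (XC.cid_chcomp _).symm⟩,
        ⟨fun A => (heq_of_eq (XC.hid_comp _)).symm,
          fun u => (XC.cid_chcomp _).symm⟩⟩,
       ⟨⟨fun A => rfl, fun f => HEq.rfl, fun u => HEq.rfl, fun α => HEq.rfl,
          fun A => (XA'.cid_chcomp _).symm, fun u v => (XA'.cid_chcomp _).symm⟩,
        ⟨fun A => rfl, fun f => HEq.rfl, fun u => HEq.rfl, fun α => HEq.rfl,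
          fun A => (XC'.cid_chcomp _).symm, fun u v => (XC'.cid_chcomp _).symm⟩,
        ⟨fun A => (heq_of_eq (XC'.hid_comp _)).symm,
          fun u => (XC'.cid_chcomp _).symm⟩⟩⟩, ?_⟩
    rintro ⟨R₀', S₀', cell'⟩ ⟨⟨m₁', n₁', hsp1⟩, ⟨m₂', n₂', hsp2⟩⟩
    obtain ⟨r0obj, r0hm, r0vm, r0cm, r0hi, r0hc, r0cc, r0cchc, r0laxid, r0laxcomp,
      r0n1, r0n2, r0l1, r0l2, r0a⟩ := R₀'
    have e1 : r0obj = (coneR0 σ σ' hσ hσ' R₁ R₂ R h₁ h₂).obj :=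
      funext fun A => Subtype.ext
        (Prod.ext_iff.mpr ⟨(m₁'.1 A).symm, (m₂'.1 A).symm⟩)
    subst e1
    have e2 : @r0hm = @LaxDblFunctor.hmap _ _ (coneR0 σ σ' hσ hσ' R₁ R₂ R h₁ h₂) := by
      funext X Y f
      exact pbHor_ext F F' (eq_of_heq (m₁'.2.1 f)).symm (eq_of_heq (m₂'.2.1 f)).symm
    subst e2
    have e3 : @r0vm = @LaxDblFunctor.vmap _ _ (coneR0 σ σ' hσ hσ' R₁ R₂ R h₁ h₂) := by
      funext X Y u
      exact pbVer_ext F F' (eq_of_heq (m₁'.2.2.1 u)).symm (eq_of_heq (m₂'.2.2.1 u)).symm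
    subst e3
    have e4 : @r0cm = @LaxDblFunctor.cmap _ _ (coneR0 σ σ' hσ hσ' R₁ R₂ R h₁ h₂) := by
      funext X Y X2 Y2 f u v g α
      exact pbCell_ext F F' (eq_of_heq (m₁'.2.2.2.1 α)).symm
        (eq_of_heq (m₂'.2.2.2.1 α)).symm
    subst e4
    have e5 : @r0laxid = @LaxDblFunctor.laxid _ _ (coneR0 σ σ' hσ hσ' R₁ R₂ R h₁ h₂) := by
      funext A
      exact pbCell_ext F F'
        (eq_of_heq ((XA.cid_chcomp _).symm.trans (m₁'.2.2.2.2.1 A).symm))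
        (eq_of_heq ((XA'.cid_chcomp _).symm.trans (m₂'.2.2.2.2.1 A).symm))
    subst e5
    have e6 : @r0laxcomp =
        @LaxDblFunctor.laxcomp _ _ (coneR0 σ σ' hσ hσ' R₁ R₂ R h₁ h₂) := by
      funext X Y Z u v
      exact pbCell_ext F F'
        (eq_of_heq ((XA.cid_chcomp _).symm.trans (m₁'.2.2.2.2.2 u v).symm))
        (eq_of_heq ((XA'.cid_chcomp _).symm.trans (m₂'.2.2.2.2.2 u v).symm))
    subst e6
    obtain ⟨s0obj, s0hm, s0vm, s0cm, s0hi, s0hc, s0cc, s0cchc, s0laxid, s0laxcomp,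
      s0n1, s0n2, s0l1, s0l2, s0a⟩ := S₀'
    have f1 : s0obj = (coneS0 σ σ' hσ hσ' S₁ S₂ S k₁ k₂).obj :=
      funext fun A => Subtype.ext
        (Prod.ext_iff.mpr ⟨(n₁'.1 A).symm, (n₂'.1 A).symm⟩)
    subst f1
    have f2 : @s0hm = @LaxDblFunctor.hmap _ _ (coneS0 σ σ' hσ hσ' S₁ S₂ S k₁ k₂) := by
      funext X Y f
      exact pbHor_ext G G' (eq_of_heq (n₁'.2.1 f)).symm (eq_of_heq (n₂'.2.1 f)).symm
    subst f2
    have f3 : @s0vm = @LaxDblFunctor.vmap _ _ (coneS0 σ σ' hσ hσ' S₁ S₂ S k₁ k₂) := by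
      funext X Y u
      exact pbVer_ext G G' (eq_of_heq (n₁'.2.2.1 u)).symm (eq_of_heq (n₂'.2.2.1 u)).symm
    subst f3
    have f4 : @s0cm = @LaxDblFunctor.cmap _ _ (coneS0 σ σ' hσ hσ' S₁ S₂ S k₁ k₂) := by
      funext X Y X2 Y2 f u v g α
      exact pbCell_ext G G' (eq_of_heq (n₁'.2.2.2.1 α)).symm
        (eq_of_heq (n₂'.2.2.2.1 α)).symm
    subst f4
    have f5 : @s0laxid = @LaxDblFunctor.laxid _ _ (coneS0 σ σ' hσ hσ' S₁ S₂ S k₁ k₂) := by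
      funext A
      exact pbCell_ext G G'
        (eq_of_heq ((XC.cid_chcomp _).symm.trans (n₁'.2.2.2.2.1 A).symm))
        (eq_of_heq ((XC'.cid_chcomp _).symm.trans (n₂'.2.2.2.2.1 A).symm))
    subst f5
    have f6 : @s0laxcomp =
        @LaxDblFunctor.laxcomp _ _ (coneS0 σ σ' hσ hσ' S₁ S₂ S k₁ k₂) := by
      funext X Y Z u v
      exact pbCell_ext G G'
        (eq_of_heq ((XC.cid_chcomp _).symm.trans (n₁'.2.2.2.2.2 u v).symm))
        (eq_of_heq ((XC'.cid_chcomp _).symm.trans (n₂'.2.2.2.2.2 u v).symm))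
    subst f6
    obtain ⟨capp, ccell, cn, ccn, cuc, ccc⟩ := cell'
    have g1 : capp =
        (coneCell σ σ' hσ hσ' Tw R₁ S₁ ρ₁ R₂ S₂ ρ₂ R S h₁ h₂ k₁ k₂ c₁ hs1 hs2).app :=
      funext fun A => pbHor_ext G G'
        (eq_of_heq ((hsp1.1 A).trans (heq_of_eq (XC.hid_comp _)))).symm
        (eq_of_heq ((hsp2.1 A).trans (heq_of_eq (XC'.hid_comp _)))).symm
    subst g1
    have g2 : @ccell = @DblCellGP.cellapp _ _ _ _ _ _ _ _
        (coneCell σ σ' hσ hσ' Tw R₁ S₁ ρ₁ R₂ S₂ ρ₂ R S h₁ h₂ k₁ k₂ c₁ hs1 hs2) := by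
      funext X Y u
      exact pbCell_ext G G'
        (eq_of_heq ((hsp1.2 u).trans (XC.cid_chcomp _))).symm
        (eq_of_heq ((hsp2.2 u).trans (XC'.cid_chcomp _))).symm
    subst g2
    rfl
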